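/- arXiv:math/0408232 — 6 statements merged into one kernel-verified Lean document; each statement's English description precedes it below -/
import Mathlib

section
/- The k-th connection matrix M(k,G) factors as M(k,G) = N(k,G)ᵀ · A(k,G) · N(k,G), where N(k,G) is the matrix with rows indexed by maps φ: [1,k] → V(G), columns indexed by k-labeled graphs F, and entries hom_φ(F,G), and A(k,G) is the diagonal matrix with diagonal entries α_φ = Π_{i=1}^k α_{φ(i)}. -/
open scoped BigOperators Classical

/-- A `k`-labeled graph: a finite multigraph (no loops) with `k` distinct
nodes labeled `1, …, k`. -/
structure KGraph (k : ℕ) where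
  V : Type
  [fV : Fintype V]
  [dV : DecidableEq V]
  lab : Fin k → V
  lab_inj : Function.Injective lab
  edges : Multiset (V × V)
  loopless : ∀ e ∈ edges, e.1 ≠ e.2

attribute [instance] KGraph.fV KGraph.dV

/-- The weighted partial homomorphism number `hom_φ(F, G)`, for a weighted graph `G`
on node set `W` with node weights `α` and edge weights `β`. -/
noncomputable def homPhi {k : ℕ} {W : Type} [Fintype W] [DecidableEq W]
    (α : W → ℝ) (β : W → W → ℝ) (F : KGraph k) (φ : Fin k → W) : ℝ :=
  ∑ ψ ∈ Finset.univ.filter (fun ψ : F.V → W => ψ ∘ F.lab = φ),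
    ((∏ u, α (ψ u)) / ∏ i, α (φ i)) *
      (F.edges.map (fun e => β (ψ e.1) (ψ e.2))).prod

/-- The full weighted homomorphism number `hom(F, G)` (labels ignored). -/
noncomputable def homT {k : ℕ} {W : Type} [Fintype W] [DecidableEq W]
    (α : W → ℝ) (β : W → W → ℝ) (F : KGraph k) : ℝ :=
  ∑ ψ : F.V → W, (∏ u, α (ψ u)) * (F.edges.map (fun e => β (ψ e.1) (ψ e.2))).prod

/-- Embedding of the vertices of `F₂` into the gluing product `F₁F₂`. -/
noncomputable def KGraph.emb {k : ℕ} (F₁ F₂ : KGraph k) (v : F₂.V) :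
    F₁.V ⊕ {v : F₂.V // v ∉ Set.range F₂.lab} :=
  if h : v ∈ Set.range F₂.lab then
    Sum.inl (F₁.lab ((Equiv.ofInjective F₂.lab F₂.lab_inj).symm ⟨v, h⟩))
  else Sum.inr ⟨v, h⟩

theorem KGraph.emb_inj {k : ℕ} (F₁ F₂ : KGraph k) :
    Function.Injective (KGraph.emb F₁ F₂) := by
  intro a b hab
  by_cases h1 : a ∈ Set.range F₂.lab <;> by_cases h2 : b ∈ Set.range F₂.lab
  · rw [KGraph.emb, dif_pos h1, KGraph.emb, dif_pos h2] at hab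
    have h3 := F₁.lab_inj (Sum.inl.inj hab)
    have h4 := (Equiv.ofInjective F₂.lab F₂.lab_inj).symm.injective h3
    simpa using congrArg Subtype.val h4
  · rw [KGraph.emb, dif_pos h1, KGraph.emb, dif_neg h2] at hab
    exact absurd hab (by simp)
  · rw [KGraph.emb, dif_neg h1, KGraph.emb, dif_pos h2] at hab
    exact absurd hab (by simp)
  · rw [KGraph.emb, dif_neg h1, KGraph.emb, dif_neg h2] at hab
    simpa using Sum.inr.inj hab

/-- The gluing product `F₁F₂` of two `k`-labeled graphs: take the disjoint union
and identify equally-labeled nodes. -/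
noncomputable def glue {k : ℕ} (F₁ F₂ : KGraph k) : KGraph k where
  V := F₁.V ⊕ {v : F₂.V // v ∉ Set.range F₂.lab}
  lab := fun i => Sum.inl (F₁.lab i)
  lab_inj := Sum.inl_injective.comp F₁.lab_inj
  edges := F₁.edges.map (fun e => (Sum.inl e.1, Sum.inl e.2)) +
    F₂.edges.map (fun e => (KGraph.emb F₁ F₂ e.1, KGraph.emb F₁ F₂ e.2))
  loopless := by
    intro e he
    simp only [Multiset.mem_add, Multiset.mem_map] at he
    rcases he with ⟨a, ha, rfl⟩ | ⟨a, ha, rfl⟩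
    · simpa using F₁.loopless a ha
    · exact fun h => F₂.loopless a ha (KGraph.emb_inj F₁ F₂ h)

/-- `σ` is an automorphism of the weighted graph given by `(α, β)`. -/
def IsAut {W : Type} (α : W → ℝ) (β : W → W → ℝ) (σ : Equiv.Perm W) : Prop :=
  (∀ v, α (σ v) = α v) ∧ ∀ u v, β (σ u) (σ v) = β u v

/-- The number of orbits of `Aut(G)` acting coordinatewise on `V(G)^k`. -/
noncomputable def orbCount {W : Type} [Fintype W] (α : W → ℝ) (β : W → W → ℝ)
    (k : ℕ) : ℕ :=
  Nat.card (Quot (fun φ ψ : Fin k → W =>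
    ∃ σ : Equiv.Perm W, IsAut α β σ ∧ ψ = σ ∘ φ))

section Aux

variable {k m : ℕ}

lemma emb_of_mem (F₁ F₂ : KGraph k) {v : F₂.V} (h : v ∈ Set.range F₂.lab) :
    KGraph.emb F₁ F₂ v =
      Sum.inl (F₁.lab ((Equiv.ofInjective F₂.lab F₂.lab_inj).symm ⟨v, h⟩)) :=
  dif_pos h

lemma emb_of_not_mem (F₁ F₂ : KGraph k) {v : F₂.V} (h : v ∉ Set.range F₂.lab) :
    KGraph.emb F₁ F₂ v = Sum.inr ⟨v, h⟩ :=
  dif_neg h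

lemma emb_lab (F₁ F₂ : KGraph k) (i : Fin k) :
    KGraph.emb F₁ F₂ (F₂.lab i) = Sum.inl (F₁.lab i) := by
  have h : F₂.lab i ∈ Set.range F₂.lab := ⟨i, rfl⟩
  rw [KGraph.emb, dif_pos h]
  congr 2
  exact Equiv.ofInjective_symm_apply F₂.lab_inj i

lemma emb_unlab (F₁ F₂ : KGraph k) (s : {v : F₂.V // v ∉ Set.range F₂.lab}) :
    KGraph.emb F₁ F₂ s.val = Sum.inr s := by
  rw [KGraph.emb, dif_neg s.property]

lemma prod_split (F₂ : KGraph k) (g : F₂.V → ℝ) :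
    ∏ v, g v =
      (∏ i, g (F₂.lab i)) * ∏ s : {v : F₂.V // v ∉ Set.range F₂.lab}, g s.val := by
  rw [← (Equiv.sumCompl (· ∈ Set.range F₂.lab)).prod_comp g, Fintype.prod_sum_type]
  congr 1
  simp only [Equiv.sumCompl_apply_inl]
  rw [← (Equiv.ofInjective F₂.lab F₂.lab_inj).prod_comp
    (fun a : Set.range F₂.lab => g a.val)]
  rfl

lemma edges_prod (α : Fin m → ℝ) (β : Fin m → Fin m → ℝ) (F₁ F₂ : KGraph k)
    (ψ : (glue F₁ F₂).V → Fin m) :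
    ((glue F₁ F₂).edges.map (fun e => β (ψ e.1) (ψ e.2))).prod =
      (F₁.edges.map (fun e => β (ψ (Sum.inl e.1)) (ψ (Sum.inl e.2)))).prod *
      (F₂.edges.map (fun e => β (ψ (KGraph.emb F₁ F₂ e.1))
        (ψ (KGraph.emb F₁ F₂ e.2)))).prod := by
  show ((F₁.edges.map (fun e : F₁.V × F₁.V =>
      ((Sum.inl e.1 : (glue F₁ F₂).V), (Sum.inl e.2 : (glue F₁ F₂).V))) +
    F₂.edges.map (fun e : F₂.V × F₂.V =>
      (KGraph.emb F₁ F₂ e.1, KGraph.emb F₁ F₂ e.2))).map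
      (fun e => β (ψ e.1) (ψ e.2))).prod = _
  rw [Multiset.map_add, Multiset.prod_add, Multiset.map_map, Multiset.map_map]
  rfl

lemma sum_fiber (F₁ F₂ : KGraph k) (ψ₁ : F₁.V → Fin m)
    (f : (F₂.V → Fin m) → ℝ) :
    ∑ ψ₂ ∈ Finset.univ.filter (fun ψ₂ : F₂.V → Fin m => ψ₂ ∘ F₂.lab = ψ₁ ∘ F₁.lab),
      f ψ₂ =
    ∑ χ : {v : F₂.V // v ∉ Set.range F₂.lab} → Fin m,
      f (Sum.elim ψ₁ χ ∘ KGraph.emb F₁ F₂) := by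
  refine Finset.sum_nbij' (fun ψ₂ => fun s => ψ₂ s.val)
    (fun χ => Sum.elim ψ₁ χ ∘ KGraph.emb F₁ F₂) (fun a _ => Finset.mem_univ _)
    (fun χ _ => ?_) (fun ψ₂ hmem => ?_) (fun χ _ => ?_) (fun ψ₂ hmem => ?_)
  · simp only [Finset.mem_filter, Finset.mem_univ, true_and]
    funext i
    simp [emb_lab]
  · -- left inverse
    simp only [Finset.mem_filter, Finset.mem_univ, true_and] at hmem
    funext v
    by_cases h : v ∈ Set.range F₂.lab
    · have hv : F₂.lab ((Equiv.ofInjective F₂.lab F₂.lab_inj).symm ⟨v, h⟩) = v :=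
        Equiv.apply_ofInjective_symm F₂.lab_inj ⟨v, h⟩
      calc (Sum.elim ψ₁ (fun s => ψ₂ s.val) ∘ KGraph.emb F₁ F₂) v
          = ψ₁ (F₁.lab ((Equiv.ofInjective F₂.lab F₂.lab_inj).symm ⟨v, h⟩)) := by
            rw [Function.comp_apply, emb_of_mem F₁ F₂ h, Sum.elim_inl]
        _ = ψ₂ (F₂.lab ((Equiv.ofInjective F₂.lab F₂.lab_inj).symm ⟨v, h⟩)) :=
            (congrFun hmem _).symm
        _ = ψ₂ v := by rw [hv]
    · show (Sum.elim ψ₁ (fun s => ψ₂ s.val) ∘ KGraph.emb F₁ F₂) v = ψ₂ v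
      rw [Function.comp_apply, emb_of_not_mem F₁ F₂ h, Sum.elim_inr]
  · -- right inverse
    funext s
    simp [Function.comp, emb_unlab]
  · -- values agree
    simp only [Finset.mem_filter, Finset.mem_univ, true_and] at hmem
    congr 1
    funext v
    by_cases h : v ∈ Set.range F₂.lab
    · have hv : F₂.lab ((Equiv.ofInjective F₂.lab F₂.lab_inj).symm ⟨v, h⟩) = v :=
        Equiv.apply_ofInjective_symm F₂.lab_inj ⟨v, h⟩
      calc ψ₂ v = ψ₂ (F₂.lab ((Equiv.ofInjective F₂.lab F₂.lab_inj).symm ⟨v, h⟩)) := by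
            rw [hv]
        _ = ψ₁ (F₁.lab ((Equiv.ofInjective F₂.lab F₂.lab_inj).symm ⟨v, h⟩)) :=
            congrFun hmem _
        _ = (Sum.elim ψ₁ (fun s => ψ₂ s.val) ∘ KGraph.emb F₁ F₂) v := by
            rw [Function.comp_apply, emb_of_mem F₁ F₂ h, Sum.elim_inl]
    · show ψ₂ v = (Sum.elim ψ₁ (fun s => ψ₂ s.val) ∘ KGraph.emb F₁ F₂) v
      rw [Function.comp_apply, emb_of_not_mem F₁ F₂ h, Sum.elim_inr]

lemma key_lemma (α : Fin m → ℝ) (β : Fin m → Fin m → ℝ)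
    (hα : ∀ i, 0 < α i) (F₁ F₂ : KGraph k) :
    homT α β (glue F₁ F₂) =
      ∑ φ : Fin k → Fin m,
        homPhi α β F₁ φ * (∏ i, α (φ i)) * homPhi α β F₂ φ := by
  have hne : ∀ φ : Fin k → Fin m, (∏ i, α (φ i)) ≠ 0 := fun φ =>
    ne_of_gt (Finset.prod_pos fun i _ => hα (φ i))
  -- Rewrite the RHS: collapse the sum over φ against the fiber condition on ψ₁.
  have step1 : ∀ φ : Fin k → Fin m,
      homPhi α β F₁ φ * (∏ i, α (φ i)) * homPhi α β F₂ φ =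
      ∑ ψ₁ ∈ Finset.univ.filter (fun ψ₁ : F₁.V → Fin m => ψ₁ ∘ F₁.lab = φ),
        ((∏ u, α (ψ₁ u)) / ∏ i, α (φ i)) *
          (F₁.edges.map (fun e => β (ψ₁ e.1) (ψ₁ e.2))).prod *
          (∏ i, α (φ i)) * homPhi α β F₂ φ := by
    intro φ
    rw [homPhi, Finset.sum_mul, Finset.sum_mul]
  have step2 : ∀ φ : Fin k → Fin m, ∀ ψ₁ ∈ Finset.univ.filter
      (fun ψ₁ : F₁.V → Fin m => ψ₁ ∘ F₁.lab = φ),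
      ((∏ u, α (ψ₁ u)) / ∏ i, α (φ i)) *
          (F₁.edges.map (fun e => β (ψ₁ e.1) (ψ₁ e.2))).prod *
          (∏ i, α (φ i)) * homPhi α β F₂ φ =
      ((∏ u, α (ψ₁ u)) / ∏ i, α (ψ₁ (F₁.lab i))) *
          (F₁.edges.map (fun e => β (ψ₁ e.1) (ψ₁ e.2))).prod *
          (∏ i, α (ψ₁ (F₁.lab i))) * homPhi α β F₂ (ψ₁ ∘ F₁.lab) := by
    intro φ ψ₁ hψ₁
    simp only [Finset.mem_filter, Finset.mem_univ, true_and] at hψ₁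
    subst hψ₁
    rfl
  rw [Finset.sum_congr rfl (fun φ _ => step1 φ),
    Finset.sum_congr rfl (fun φ _ => Finset.sum_congr rfl (step2 φ)),
    Finset.sum_fiberwise Finset.univ
      (fun ψ₁ : F₁.V → Fin m => ψ₁ ∘ F₁.lab)
      (fun ψ₁ : F₁.V → Fin m =>
        ((∏ u, α (ψ₁ u)) / ∏ i, α (ψ₁ (F₁.lab i))) *
          (F₁.edges.map (fun e => β (ψ₁ e.1) (ψ₁ e.2))).prod *
          (∏ i, α (ψ₁ (F₁.lab i))) * homPhi α β F₂ (ψ₁ ∘ F₁.lab))]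
  -- Now both sides are sums over ψ₁; expand homPhi F₂ via the fiber bijection.
  rw [homT]
  have hsum : (∑ ψ : (glue F₁ F₂).V → Fin m,
      (∏ u, α (ψ u)) * ((glue F₁ F₂).edges.map (fun e => β (ψ e.1) (ψ e.2))).prod) =
      ∑ ψ₁ : F₁.V → Fin m, ∑ χ : {v : F₂.V // v ∉ Set.range F₂.lab} → Fin m,
        (∏ u : (glue F₁ F₂).V, α (Sum.elim ψ₁ χ u)) *
          ((glue F₁ F₂).edges.map (fun e =>
            β (Sum.elim ψ₁ χ e.1) (Sum.elim ψ₁ χ e.2))).prod := by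
    exact ((Equiv.sumArrowEquivProdArrow F₁.V
      {v : F₂.V // v ∉ Set.range F₂.lab} (Fin m)).symm.sum_comp
      (fun ψ : (glue F₁ F₂).V → Fin m =>
        (∏ u, α (ψ u)) *
          ((glue F₁ F₂).edges.map (fun e => β (ψ e.1) (ψ e.2))).prod)).symm.trans
      (Fintype.sum_prod_type
        (fun p : (F₁.V → Fin m) × ({v : F₂.V // v ∉ Set.range F₂.lab} → Fin m) =>
          (∏ u : (glue F₁ F₂).V, α (Sum.elim p.1 p.2 u)) *
            ((glue F₁ F₂).edges.map (fun e =>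
              β (Sum.elim p.1 p.2 e.1) (Sum.elim p.1 p.2 e.2))).prod))
  rw [hsum]
  refine Finset.sum_congr rfl (fun ψ₁ _ => ?_)
  rw [homPhi, sum_fiber F₁ F₂ ψ₁, Finset.mul_sum]
  refine Finset.sum_congr rfl (fun χ _ => ?_)
  set ψ₂ : F₂.V → Fin m := Sum.elim ψ₁ χ ∘ KGraph.emb F₁ F₂ with hψ₂
  have hA2 : (∏ v, α (ψ₂ v)) =
      (∏ i, α (ψ₁ (F₁.lab i))) * ∏ s, α (χ s) := by
    rw [prod_split F₂ (fun v => α (ψ₂ v))]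
    congr 1
    · refine Finset.prod_congr rfl (fun i _ => ?_)
      simp [hψ₂, Function.comp, emb_lab]
    · refine Finset.prod_congr rfl (fun s _ => ?_)
      simp [hψ₂, Function.comp, emb_unlab]
  have hprodA : (∏ u : (glue F₁ F₂).V, α (Sum.elim ψ₁ χ u)) =
      (∏ u, α (ψ₁ u)) * ∏ s, α (χ s) :=
    Fintype.prod_sum_type (fun u : (glue F₁ F₂).V => α (Sum.elim ψ₁ χ u))
  rw [hprodA, edges_prod α β F₁ F₂ (Sum.elim ψ₁ χ)]
  have h2 : (F₂.edges.map (fun e => β (Sum.elim ψ₁ χ (KGraph.emb F₁ F₂ e.1))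
      (Sum.elim ψ₁ χ (KGraph.emb F₁ F₂ e.2)))).prod =
      (F₂.edges.map (fun e => β (ψ₂ e.1) (ψ₂ e.2))).prod := rfl
  have h1 : (F₁.edges.map (fun e => β (Sum.elim ψ₁ χ (Sum.inl e.1))
      (Sum.elim ψ₁ χ (Sum.inl e.2)))).prod =
      (F₁.edges.map (fun e => β (ψ₁ e.1) (ψ₁ e.2))).prod := rfl
  rw [h1, h2, hA2]
  have ha := hne (ψ₁ ∘ F₁.lab)
  have ha' : (∏ i, α (ψ₁ (F₁.lab i))) ≠ 0 := ha
  field_simp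
  rfl

end Aux

/-- the connection matrix factors as `M(k,G) = N(k,G)ᵀ · A(k,G) · N(k,G)`. -/
theorem connection_matrix_factorization {m k : ℕ} (α : Fin m → ℝ) (β : Fin m → Fin m → ℝ)
    (hα : ∀ i, 0 < α i) (hβ : ∀ i j, β i j = β j i) :
    (Matrix.of fun F₁ F₂ : KGraph k => homT α β (glue F₁ F₂)) =
      Matrix.transpose (Matrix.of fun (φ : Fin k → Fin m) (F : KGraph k) => homPhi α β F φ) *
        Matrix.diagonal (fun φ : Fin k → Fin m => ∏ i, α (φ i)) *
        (Matrix.of fun (φ : Fin k → Fin m) (F : KGraph k) => homPhi α β F φ) := by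
  ext F₁ F₂
  rw [Matrix.mul_apply]
  simp only [Matrix.mul_diagonal, Matrix.transpose_apply, Matrix.of_apply]
  exact key_lemma α β hα F₁ F₂
end

section
/- For any weighted graph G with positive node weights, every finite principal submatrix of the connection matrix M(k,G) is positive semidefinite. -/
open scoped BigOperators Classical

/-!
Splitting a map `V(F₁F₂) → V(G)` into its values `φ` on the labeled nodes and its values on the
unlabeled nodes of `F₁` and of `F₂` gives `hom(F₁F₂, G) = ∑_φ α_φ · h(F₁, φ) · h(F₂, φ)`, where
`h(F, φ)` sums over the extensions of `φ` to all of `F`. Hence the connection matrix is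
`A · diag(α_φ) · Aᵀ` with `A = (h(Fᵢ, φ))`, which is positive semidefinite because `α_φ ≥ 0`.
-/

lemma Matrix.posSemidef_of_weighted_sum_mul {ι κ : Type*} [Fintype ι] [Fintype κ]
    (d : κ → ℝ) (hd : 0 ≤ d) (A : ι → κ → ℝ) :
    (Matrix.of fun i j => ∑ x, d x * (A i x * A j x)).PosSemidef := by
  have h := (Matrix.PosSemidef.diagonal hd).mul_mul_conjTranspose_same (Matrix.of A)
  convert h using 1
  ext i j
  rw [Matrix.mul_apply]
  simp only [Matrix.mul_diagonal, Matrix.of_apply, Matrix.conjTranspose_apply,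
    star_trivial]
  exact Finset.sum_congr rfl fun x _ => by ring

namespace KGraph

variable {k : ℕ} {W : Type}

abbrev Unlabeled (F : KGraph k) : Type := {v : F.V // v ∉ Set.range F.lab}

noncomputable def labelEquiv (F : KGraph k) : Fin k ⊕ F.Unlabeled ≃ F.V :=
  ((Equiv.ofInjective F.lab F.lab_inj).sumCongr (Equiv.refl _)).trans
    (Equiv.sumCompl (· ∈ Set.range F.lab))

lemma labelEquiv_inl (F : KGraph k) (i : Fin k) : F.labelEquiv (Sum.inl i) = F.lab i := rfl

lemma labelEquiv_inr (F : KGraph k) (s : F.Unlabeled) : F.labelEquiv (Sum.inr s) = s := rfl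

noncomputable def extend (F : KGraph k) (φ : Fin k → W) (g : F.Unlabeled → W) : F.V → W :=
  Sum.elim φ g ∘ F.labelEquiv.symm

@[simp]
lemma extend_lab (F : KGraph k) (φ : Fin k → W) (g : F.Unlabeled → W) (i : Fin k) :
    F.extend φ g (F.lab i) = φ i := by
  simp [extend, ← labelEquiv_inl]

@[simp]
lemma extend_val (F : KGraph k) (φ : Fin k → W) (g : F.Unlabeled → W) (s : F.Unlabeled) :
    F.extend φ g s = g s := by
  simp [extend, ← labelEquiv_inr]

lemma extend_comp_lab (F : KGraph k) (φ : Fin k → W) (g : F.Unlabeled → W) :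
    F.extend φ g ∘ F.lab = φ :=
  funext (F.extend_lab φ g)

lemma sum_arrow_eq_sum_extend [Fintype W] {M : Type*} [AddCommMonoid M] (F : KGraph k)
    (f : (F.V → W) → M) : ∑ ψ, f ψ = ∑ φ, ∑ g, f (F.extend φ g) := by
  rw [← Fintype.sum_prod_type']
  exact (Fintype.sum_equiv ((Equiv.sumArrowEquivProdArrow _ _ _).symm.trans
    (F.labelEquiv.arrowCongr (Equiv.refl W))) _ _ fun _ => rfl).symm

lemma prod_extend {M : Type*} [CommMonoid M] (F : KGraph k) (a : W → M) (φ : Fin k → W)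
    (g : F.Unlabeled → W) :
    ∏ u, a (F.extend φ g u) = (∏ i, a (φ i)) * ∏ s, a (g s) := by
  rw [← F.labelEquiv.prod_comp, Fintype.prod_sum_type]
  simp [labelEquiv_inl, labelEquiv_inr]

lemma elim_emb (F₁ F₂ : KGraph k) (ψ : F₁.V → W) (g : F₂.Unlabeled → W) (v : F₂.V) :
    Sum.elim ψ g (emb F₁ F₂ v) = F₂.extend (ψ ∘ F₁.lab) g v := by
  obtain ⟨i | s, rfl⟩ := F₂.labelEquiv.surjective v
  · have hv : F₂.lab i ∈ Set.range F₂.lab := ⟨i, rfl⟩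
    simp [labelEquiv_inl, emb, hv]
  · simp [labelEquiv_inr, emb, s.2]

end KGraph

open KGraph

section Hom

variable {k : ℕ} {W : Type}

noncomputable def edgeWeight (β : W → W → ℝ) (F : KGraph k) (ψ : F.V → W) : ℝ :=
  (F.edges.map fun e => β (ψ e.1) (ψ e.2)).prod

lemma homT_eq [Fintype W] [DecidableEq W] (α : W → ℝ) (β : W → W → ℝ) (F : KGraph k) :
    homT α β F = ∑ ψ, (∏ u, α (ψ u)) * edgeWeight β F ψ := rfl

/-- `homPhi α β F φ` without the normalizing division by `∏ i, α (φ i)`. -/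
noncomputable def homExtend [Fintype W] (α : W → ℝ) (β : W → W → ℝ) (F : KGraph k)
    (φ : Fin k → W) : ℝ :=
  ∑ g : F.Unlabeled → W, (∏ s, α (g s)) * edgeWeight β F (F.extend φ g)

lemma edgeWeight_glue (β : W → W → ℝ) (F₁ F₂ : KGraph k) (ψ : F₁.V → W)
    (g : F₂.Unlabeled → W) :
    edgeWeight β (glue F₁ F₂) (Sum.elim ψ g) =
      edgeWeight β F₁ ψ * edgeWeight β F₂ (F₂.extend (ψ ∘ F₁.lab) g) := by
  simp only [edgeWeight, glue, Multiset.map_add, Multiset.prod_add, Multiset.map_map,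
    Function.comp_def, elim_emb, Sum.elim_inl]

lemma prod_elim_glue {M : Type*} [CommMonoid M] (F₁ F₂ : KGraph k) (a : W → M)
    (ψ : F₁.V → W) (g : F₂.Unlabeled → W) :
    ∏ u : (glue F₁ F₂).V, a (Sum.elim ψ g u) = (∏ u, a (ψ u)) * ∏ s, a (g s) :=
  Fintype.prod_sum_type _

lemma sum_arrow_glue [Fintype W] {M : Type*} [AddCommMonoid M] (F₁ F₂ : KGraph k)
    (f : ((glue F₁ F₂).V → W) → M) : ∑ ψ, f ψ = ∑ ψ₁, ∑ g, f (Sum.elim ψ₁ g) := by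
  rw [← Fintype.sum_prod_type']
  exact (Fintype.sum_equiv (Equiv.sumArrowEquivProdArrow _ _ _).symm _ _ fun _ => rfl).symm

theorem homT_glue [Fintype W] [DecidableEq W] (α : W → ℝ) (β : W → W → ℝ) (F₁ F₂ : KGraph k) :
    homT α β (glue F₁ F₂) =
      ∑ φ, (∏ i, α (φ i)) * (homExtend α β F₁ φ * homExtend α β F₂ φ) := by
  rw [homT_eq, sum_arrow_glue, F₁.sum_arrow_eq_sum_extend]
  refine Finset.sum_congr rfl fun φ _ => ?_
  rw [homExtend, homExtend, Finset.sum_mul_sum, Finset.mul_sum]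
  refine Finset.sum_congr rfl fun g₁ _ => ?_
  rw [Finset.mul_sum]
  refine Finset.sum_congr rfl fun g₂ _ => ?_
  rw [edgeWeight_glue, prod_elim_glue, prod_extend, extend_comp_lab]
  ring

end Hom

theorem connection_matrix_posSemidef_general {m k : ℕ} (α : Fin m → ℝ) (β : Fin m → Fin m → ℝ)
    (hα : ∀ i, 0 < α i)
    (ι : Type) [Fintype ι] (Fs : ι → KGraph k) :
    Matrix.PosSemidef (Matrix.of fun i j : ι => homT α β (glue (Fs i) (Fs j))) := by
  simp only [homT_glue]
  exact Matrix.posSemidef_of_weighted_sum_mul _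
    (fun φ => Finset.prod_nonneg fun i _ => (hα (φ i)).le) _

/-- every finite principal submatrix of the connection matrix `M(k,G)`
is positive semidefinite. -/
theorem connection_matrix_posSemidef {m k : ℕ} (α : Fin m → ℝ) (β : Fin m → Fin m → ℝ)
    (hα : ∀ i, 0 < α i) (hβ : ∀ i j, β i j = β j i)
    (ι : Type) [Fintype ι] (Fs : ι → KGraph k) :
    Matrix.PosSemidef (Matrix.of fun i j : ι => homT α β (glue (Fs i) (Fs j))) :=
  connection_matrix_posSemidef_general α β hα ι Fs
end

section
/- For any weighted graph G on m nodes, the rank of the connection matrix M(k,G) is at most m^k. More precisely, any set of more than m^k k-labeled graphs indexes a linearly dependent set of rows of M(k,G). -/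
open scoped BigOperators Classical

lemma glue_homT {m k : ℕ} (α : Fin m → ℝ) (β : Fin m → Fin m → ℝ)
    (hα : ∀ i, 0 < α i) (F₁ F₂ : KGraph k) :
    homT α β (glue F₁ F₂) =
      ∑ φ : Fin k → Fin m, (∏ i, α (φ i)) * (homPhi α β F₁ φ * homPhi α β F₂ φ) := by
  classical
  have hPφ : ∀ φ : Fin k → Fin m, (∏ i, α (φ i)) ≠ 0 :=
    fun φ => Finset.prod_ne_zero_iff.2 fun i _ => (hα (φ i)).ne'
  set S := {v : F₂.V // v ∉ Set.range F₂.lab} with hS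
  set ext : (F₁.V → Fin m) → (S → Fin m) → (F₂.V → Fin m) :=
    fun ψ₁ χ v => Sum.elim ψ₁ χ (KGraph.emb F₁ F₂ v) with hext
  have hext_lab : ∀ ψ₁ χ (i : Fin k), ext ψ₁ χ (F₂.lab i) = ψ₁ (F₁.lab i) := by
    intro ψ₁ χ i
    have h : F₂.lab i ∈ Set.range F₂.lab := ⟨i, rfl⟩
    simp only [hext, KGraph.emb, dif_pos h, Sum.elim_inl]
    congr 1
    exact congrArg F₁.lab (Equiv.ofInjective_symm_apply F₂.lab_inj i)
  have hext_S : ∀ ψ₁ χ (s : S), ext ψ₁ χ s.val = χ s := by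
    intro ψ₁ χ s
    simp only [hext, KGraph.emb, dif_neg s.2, Sum.elim_inr]
    rfl
  have hsplit : ∀ f : F₂.V → ℝ, (∏ v, f v) = (∏ i, f (F₂.lab i)) * ∏ s : S, f s.val := by
    intro f
    rw [← Finset.prod_filter_mul_prod_filter_not Finset.univ (fun v => v ∈ Set.range F₂.lab) f]
    congr 1
    · rw [show Finset.univ.filter (fun v => v ∈ Set.range F₂.lab)
          = Finset.univ.image F₂.lab by ext v; simp [eq_comm]]
      exact Finset.prod_image fun a _ b _ h => F₂.lab_inj h
    · exact Finset.prod_subtype _ (fun x => by simp) f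
  set A : (F₁.V → Fin m) → ℝ := fun ψ =>
    (∏ u, α (ψ u)) * (F₁.edges.map (fun e => β (ψ e.1) (ψ e.2))).prod with hA
  set B : (F₂.V → Fin m) → ℝ := fun ψ =>
    (∏ u, α (ψ u)) * (F₂.edges.map (fun e => β (ψ e.1) (ψ e.2))).prod with hB
  set SB : (Fin k → Fin m) → ℝ := fun φ =>
    ∑ ψ₂ ∈ Finset.univ.filter (fun ψ : F₂.V → Fin m => ψ ∘ F₂.lab = φ), B ψ₂ with hSB
  have hhom₁ : ∀ φ, homPhi α β F₁ φ =
      (∑ ψ ∈ Finset.univ.filter (fun ψ : F₁.V → Fin m => ψ ∘ F₁.lab = φ), A ψ)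
        / ∏ i, α (φ i) := by
    intro φ
    rw [homPhi, Finset.sum_div]
    refine Finset.sum_congr rfl fun ψ _ => ?_
    simp only [hA]
    rw [div_mul_eq_mul_div]
  have hhom₂ : ∀ φ, homPhi α β F₂ φ = SB φ / ∏ i, α (φ i) := by
    intro φ
    rw [homPhi, Finset.sum_div]
    refine Finset.sum_congr rfl fun ψ _ => ?_
    simp only [hB]
    rw [div_mul_eq_mul_div]
  -- LHS as a double sum
  have hL : homT α β (glue F₁ F₂) =
      ∑ p : (F₁.V → Fin m) × (S → Fin m),
        A p.1 * ((∏ s : S, α (p.2 s)) *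
          (F₂.edges.map (fun e => β (ext p.1 p.2 e.1) (ext p.1 p.2 e.2))).prod) := by
    rw [homT]
    refine Fintype.sum_equiv (Equiv.sumArrowEquivProdArrow F₁.V S (Fin m)) _ _ ?_
    intro ψ
    have h1 : ∀ y, Sum.elim (fun a => ψ (Sum.inl a)) (fun b => ψ (Sum.inr b)) y = ψ y :=
      fun y => by cases y <;> rfl
    simp only [Equiv.sumArrowEquivProdArrow, Equiv.coe_fn_mk, glue, hext, hA,
      Multiset.map_add, Multiset.prod_add, Multiset.map_map, Function.comp_def,
      Fintype.prod_sum_type, h1]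
    erw [Fintype.prod_sum_type]
    ring
  -- RHS: collapse the φ-sum
  have step1 : ∀ φ : Fin k → Fin m,
      (∏ i, α (φ i)) * (homPhi α β F₁ φ * homPhi α β F₂ φ)
      = ∑ ψ₁ ∈ Finset.univ.filter (fun ψ : F₁.V → Fin m => ψ ∘ F₁.lab = φ),
          A ψ₁ * (SB φ / ∏ i, α (φ i)) := by
    intro φ
    rw [hhom₁ φ, hhom₂ φ, ← Finset.sum_mul]
    have hP := hPφ φ
    field_simp
  have step2 : ∀ φ : Fin k → Fin m,
      (∑ ψ₁ ∈ Finset.univ.filter (fun ψ : F₁.V → Fin m => ψ ∘ F₁.lab = φ),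
          A ψ₁ * (SB φ / ∏ i, α (φ i)))
      = ∑ ψ₁ ∈ Finset.univ.filter (fun ψ : F₁.V → Fin m => ψ ∘ F₁.lab = φ),
          A ψ₁ * (SB (ψ₁ ∘ F₁.lab) / ∏ i, α ((ψ₁ ∘ F₁.lab) i)) := by
    intro φ
    refine Finset.sum_congr rfl fun ψ₁ hψ₁ => ?_
    simp only [Finset.mem_filter, Finset.mem_univ, true_and] at hψ₁
    rw [hψ₁]
  calc homT α β (glue F₁ F₂)
      = ∑ p : (F₁.V → Fin m) × (S → Fin m),
          A p.1 * ((∏ s : S, α (p.2 s)) *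
            (F₂.edges.map (fun e => β (ext p.1 p.2 e.1) (ext p.1 p.2 e.2))).prod) := hL
    _ = ∑ ψ₁ : F₁.V → Fin m, ∑ χ : S → Fin m,
          A ψ₁ * ((∏ s : S, α (χ s)) *
            (F₂.edges.map (fun e => β (ext ψ₁ χ e.1) (ext ψ₁ χ e.2))).prod) :=
        Fintype.sum_prod_type _
    _ = ∑ ψ₁ : F₁.V → Fin m,
          A ψ₁ * (SB (ψ₁ ∘ F₁.lab) / ∏ i, α ((ψ₁ ∘ F₁.lab) i)) := by
        refine Finset.sum_congr rfl fun ψ₁ _ => ?_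
        have hleft : ∀ ψ₂ : F₂.V → Fin m, ψ₂ ∘ F₂.lab = ψ₁ ∘ F₁.lab →
            ext ψ₁ (fun s : S => ψ₂ s.val) = ψ₂ := by
          intro ψ₂ hψ₂
          funext v
          by_cases hv : v ∈ Set.range F₂.lab
          · obtain ⟨i, rfl⟩ := hv
            rw [hext_lab]
            exact (congrFun hψ₂ i).symm
          · exact hext_S ψ₁ _ ⟨v, hv⟩
        have hbij : SB (ψ₁ ∘ F₁.lab) = ∑ χ : S → Fin m, B (ext ψ₁ χ) := by
          rw [hSB]
          refine Finset.sum_bij' (fun ψ₂ _ => fun s : S => ψ₂ s.val)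
            (fun χ _ => ext ψ₁ χ) (fun _ _ => Finset.mem_univ _) ?_ ?_ ?_ ?_
          · intro χ _
            simp only [Finset.mem_filter, Finset.mem_univ, true_and]
            funext i
            exact hext_lab ψ₁ χ i
          · intro ψ₂ hψ₂
            simp only [Finset.mem_filter, Finset.mem_univ, true_and] at hψ₂
            exact hleft ψ₂ hψ₂
          · intro χ _
            funext s
            exact hext_S ψ₁ χ s
          · intro ψ₂ hψ₂
            simp only [Finset.mem_filter, Finset.mem_univ, true_and] at hψ₂
            rw [hleft ψ₂ hψ₂]
        have hBval : ∀ χ : S → Fin m, B (ext ψ₁ χ) =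
            ((∏ i, α (ψ₁ (F₁.lab i))) * ∏ s : S, α (χ s)) *
              (F₂.edges.map (fun e => β (ext ψ₁ χ e.1) (ext ψ₁ χ e.2))).prod := by
          intro χ
          simp only [hB]
          rw [hsplit (fun v => α (ext ψ₁ χ v))]
          congr 1
          congr 1
          · exact Finset.prod_congr rfl fun i _ => congrArg α (hext_lab ψ₁ χ i)
          · exact Finset.prod_congr rfl fun s _ => congrArg α (hext_S ψ₁ χ s)
        rw [hbij]
        simp only [hBval]
        rw [Finset.sum_div, Finset.mul_sum]
        refine Finset.sum_congr rfl fun χ _ => ?_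
        have hP : (∏ i, α (ψ₁ (F₁.lab i))) ≠ 0 := hPφ (ψ₁ ∘ F₁.lab)
        simp only [Function.comp_apply]
        field_simp
    _ = ∑ φ : Fin k → Fin m,
          ∑ ψ₁ ∈ Finset.univ.filter (fun ψ : F₁.V → Fin m => ψ ∘ F₁.lab = φ),
            A ψ₁ * (SB (ψ₁ ∘ F₁.lab) / ∏ i, α ((ψ₁ ∘ F₁.lab) i)) :=
        (Finset.sum_fiberwise Finset.univ (fun ψ : F₁.V → Fin m => ψ ∘ F₁.lab)
          (fun ψ₁ => A ψ₁ * (SB (ψ₁ ∘ F₁.lab) / ∏ i, α ((ψ₁ ∘ F₁.lab) i)))).symm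
    _ = ∑ φ : Fin k → Fin m, (∏ i, α (φ i)) * (homPhi α β F₁ φ * homPhi α β F₂ φ) := by
        refine Finset.sum_congr rfl fun φ _ => ?_
        rw [← step2 φ, ← step1 φ]

/-- the rank of `M(k,G)` is at most `m^k`; more precisely, any more than
`m^k` rows of `M(k,G)` are linearly dependent. -/
theorem connection_matrix_rank_le {m k : ℕ} (α : Fin m → ℝ) (β : Fin m → Fin m → ℝ)
    (hα : ∀ i, 0 < α i) (hβ : ∀ i j, β i j = β j i) :
    Module.rank ℝ ↥(Submodule.span ℝ
        (Set.range fun F₁ : KGraph k => fun F₂ : KGraph k => homT α β (glue F₁ F₂)))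
      ≤ (m ^ k : Cardinal) ∧
    ∀ (ι : Type) (_ : Fintype ι) (Fs : ι → KGraph k), m ^ k < Fintype.card ι →
      ¬ LinearIndependent ℝ (fun i : ι => fun F₂ : KGraph k => homT α β (glue (Fs i) F₂)) := by
  classical
  set g : (Fin k → Fin m) → (KGraph k → ℝ) := fun φ F₂ => homPhi α β F₂ φ with hg
  have hrow : ∀ F₁ : KGraph k, (fun F₂ : KGraph k => homT α β (glue F₁ F₂))
      = ∑ φ : Fin k → Fin m, ((∏ i, α (φ i)) * homPhi α β F₁ φ) • g φ := by
    intro F₁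
    funext F₂
    rw [Finset.sum_apply, glue_homT α β hα F₁ F₂]
    refine Finset.sum_congr rfl fun φ _ => ?_
    simp [hg, mul_assoc, mul_comm (homPhi α β F₁ φ) (homPhi α β F₂ φ)]
  have hmem : ∀ F₁ : KGraph k, (fun F₂ : KGraph k => homT α β (glue F₁ F₂))
      ∈ Submodule.span ℝ (Set.range g) := by
    intro F₁
    rw [hrow F₁]
    exact Submodule.sum_mem _ fun φ _ => Submodule.smul_mem _ _
      (Submodule.subset_span ⟨φ, rfl⟩)
  have hspan : Submodule.span ℝ (Set.range fun F₁ : KGraph k =>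
        fun F₂ : KGraph k => homT α β (glue F₁ F₂)) ≤ Submodule.span ℝ (Set.range g) :=
    Submodule.span_le.2 (by rintro _ ⟨F₁, rfl⟩; exact hmem F₁)
  have hcard : Module.rank ℝ ↥(Submodule.span ℝ (Set.range g)) ≤ (m ^ k : Cardinal) := by
    refine le_trans (rank_span_le _) ?_
    haveI : Fintype ↥(Set.range g) := Set.fintypeRange g
    rw [Cardinal.mk_fintype]
    have h1 : Fintype.card ↥(Set.range g) ≤ m ^ k := by
      refine le_trans (Fintype.card_range_le g) ?_
      simp only [Fintype.card_fun, Fintype.card_fin, le_refl]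
    exact_mod_cast h1
  constructor
  · exact le_trans (Submodule.rank_mono hspan) hcard
  · intro ι inst Fs hlt li
    have li' : LinearIndependent ℝ (fun i : ι =>
        (⟨fun F₂ : KGraph k => homT α β (glue (Fs i) F₂), hmem (Fs i)⟩ :
          ↥(Submodule.span ℝ (Set.range g)))) :=
      li.of_comp (Submodule.span ℝ (Set.range g)).subtype
    have hle : (Fintype.card ι : Cardinal) ≤ (m ^ k : Cardinal) := by
      refine le_trans ?_ hcard
      have hle0 := li'.cardinal_lift_le_rank
      simpa using hle0
    have hlt' : (m ^ k : Cardinal) < (Fintype.card ι : Cardinal) := by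
      exact_mod_cast hlt
    exact absurd hle (not_le.2 hlt')
end

section
/- Let β be a symmetric m×m real matrix with no two equal rows (twin-free), and let φ: [1,m] → [1,m] satisfy β_{φ(i),φ(j)} = β_{i,j} for all i,j. Then some power γ = φˢ of φ (s ≥ 1) is idempotent (γ∘γ = γ), and this idempotent γ satisfies β_{γ(i),l} = β_{i,l} for all i,l; hence γ is the identity and φ is a permutation. -/
open scoped BigOperators Classical

theorem injective_of_preserves_of_twinFree {α R : Type*} {β : α → α → R}
    (htf : ∀ i j, (∀ l, β i l = β j l) → i = j) {f : α → α}
    (hf : ∀ i j, β (f i) (f j) = β i j) : Function.Injective f := by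
  intro i j hij
  refine htf i j fun l => ?_
  rw [← hf i l, ← hf j l, hij]

theorem Function.Bijective.exists_iterate_eq_id {α : Type*} [Finite α] {f : α → α}
    (hf : Function.Bijective f) : ∃ n, 1 ≤ n ∧ f^[n] = id := by
  let σ := Equiv.ofBijective f hf
  refine ⟨orderOf σ, orderOf_pos σ, ?_⟩
  change (⇑σ)^[orderOf σ] = id
  rw [← Equiv.Perm.coe_pow, pow_orderOf_eq_one, Equiv.Perm.coe_one]

theorem idempotent_power_is_identity_general {m : ℕ} (β : Fin m → Fin m → ℝ)
    (htf : ∀ i j : Fin m, (∀ l, β i l = β j l) → i = j)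
    (φ : Fin m → Fin m) (hφ : ∀ i j, β (φ i) (φ j) = β i j) :
    ∃ s : ℕ, 1 ≤ s ∧ (φ^[s]) ∘ (φ^[s]) = φ^[s] ∧
      (∀ i l, β (φ^[s] i) l = β i l) ∧ φ^[s] = id ∧ Function.Bijective φ := by
  have hbij : Function.Bijective φ :=
    Finite.injective_iff_bijective.mp (injective_of_preserves_of_twinFree htf hφ)
  obtain ⟨s, hs, hid⟩ := hbij.exists_iterate_eq_id
  exact ⟨s, hs, by rw [hid]; rfl, by simp [hid], hid, hbij⟩

/-- some power `γ = φ^s` (`s ≥ 1`) of `φ` is idempotent; this idempotent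
satisfies `β_{γ(i),l} = β_{i,l}` for all `i, l`; hence `γ` is the identity and `φ` is a
permutation. -/
theorem idempotent_power_is_identity {m : ℕ} (β : Fin m → Fin m → ℝ)
    (hβ : ∀ i j, β i j = β j i)
    (htf : ∀ i j : Fin m, (∀ l, β i l = β j l) → i = j)
    (φ : Fin m → Fin m) (hφ : ∀ i j, β (φ i) (φ j) = β i j) :
    ∃ s : ℕ, 1 ≤ s ∧ (φ^[s]) ∘ (φ^[s]) = φ^[s] ∧
      (∀ i l, β (φ^[s] i) l = β i l) ∧ φ^[s] = id ∧ Function.Bijective φ :=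
  idempotent_power_is_identity_general β htf φ hφ
end

section
/- Let G be a twin-free weighted graph and let φ, ψ ∈ V(G)^k be such that hom_φ(F, G) = hom_ψ(F, G) for every k-labeled graph F. Then there exists an automorphism σ of G such that ψ = σ ∘ φ. -/
open scoped BigOperators Classical

section AuxLemmas
open Finset


lemma moment_lemma {S ι : Type} [Fintype S] [Fintype ι] [Nonempty ι]
    (x : S → ι → ℝ) (c : S → ℝ)
    (h : ∀ n : ι → ℕ, ∑ s, c s * ∏ i, x s i ^ n i = 0) (s₀ : S) :
    ∑ s ∈ Finset.univ.filter (fun s => x s = x s₀), c s = 0 := by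
  classical
  set ind : (ι → ℝ) → ι := fun u => Classical.epsilon (fun i => u i ≠ x s₀ i) with hind
  have key : ∀ A : Finset (ι → ℝ), ∀ n : ι → ℕ,
      ∑ s, c s * ((∏ u ∈ A, (x s (ind u) - u (ind u))) * ∏ i, x s i ^ n i) = 0 := by
    intro A
    induction A using Finset.induction with
    | empty => intro n; simpa using h n
    | insert _ _ hu ih =>
      rename_i u A
      intro n
      have expand : ∀ s : S,
          c s * ((∏ w ∈ insert u A, (x s (ind w) - w (ind w))) * ∏ i, x s i ^ n i)
          = c s * ((∏ w ∈ A, (x s (ind w) - w (ind w))) *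
              ∏ i, x s i ^ (fun i => n i + if i = ind u then 1 else 0) i)
            - u (ind u) * (c s * ((∏ w ∈ A, (x s (ind w) - w (ind w))) * ∏ i, x s i ^ n i)) := by
        intro s
        have hpow : (∏ i, x s i ^ (n i + if i = ind u then 1 else 0))
            = x s (ind u) * ∏ i, x s i ^ n i := by
          have : ∀ i, x s i ^ (n i + if i = ind u then 1 else 0)
              = x s i ^ n i * (if i = ind u then x s i else 1) := by
            intro i
            by_cases hi : i = ind u <;> simp [hi, pow_add, pow_succ]
          rw [Finset.prod_congr rfl (fun i _ => this i), Finset.prod_mul_distrib,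
            Finset.prod_ite_eq' Finset.univ (ind u) (fun i => x s i)]
          simp [mul_comm]
        rw [Finset.prod_insert hu]
        simp only [hpow]
        ring
      rw [Finset.sum_congr rfl (fun s _ => expand s), Finset.sum_sub_distrib,
        ih _, ← Finset.mul_sum, ih n, mul_zero, sub_zero]
  -- now apply with A = image minus x s₀
  set T : Finset (ι → ℝ) := (Finset.univ.image x).erase (x s₀) with hT
  have hkey := key T (fun _ => 0)
  have hC : ∀ u ∈ T, u (ind u) ≠ x s₀ (ind u) := by
    intro u hu
    have hne : u ≠ x s₀ := (Finset.mem_erase.mp hu).1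
    have : ∃ i, u i ≠ x s₀ i := Function.ne_iff.mp hne
    exact Classical.epsilon_spec this
  set C : ℝ := ∏ u ∈ T, (x s₀ (ind u) - u (ind u)) with hCdef
  have hCne : C ≠ 0 := by
    rw [hCdef]
    exact Finset.prod_ne_zero_iff.mpr (fun u hu => sub_ne_zero.mpr (Ne.symm (hC u hu)))
  have split : ∑ s, c s * ((∏ u ∈ T, (x s (ind u) - u (ind u))) * ∏ i, x s i ^ (0:ℕ)) 
      = (∑ s ∈ Finset.univ.filter (fun s => x s = x s₀), c s) * C := by
    rw [Finset.sum_filter, Finset.sum_mul]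
    apply Finset.sum_congr rfl
    intro s _
    by_cases hs : x s = x s₀
    · simp only [hs, if_pos]
      simp [hCdef]
    · have hmem : x s ∈ T := by
        rw [hT]
        exact Finset.mem_erase.mpr ⟨hs, Finset.mem_image_of_mem x (Finset.mem_univ s)⟩
      have : (∏ u ∈ T, (x s (ind u) - u (ind u))) = 0 :=
        Finset.prod_eq_zero hmem (by simp)
      simp [this, hs]
  rw [split] at hkey
  exact (mul_eq_zero.mp hkey).resolve_right hCne

lemma multiset_prod_map_sum' {ι γ M : Type*} [CommMonoid M] (s : Finset ι)
    (g : ι → Multiset γ) (f : γ → M) :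
    ((∑ i ∈ s, g i).map f).prod = ∏ i ∈ s, ((g i).map f).prod := by
  classical
  induction s using Finset.cons_induction with
  | empty => simp
  | cons a s ha ih => rw [Finset.sum_cons, Multiset.map_add, Multiset.prod_add, ih, Finset.prod_cons]

noncomputable def Fg (k : ℕ) (U : Type) [Fintype U] [DecidableEq U]
    (Q : Fin k × U → ℕ) (P : U × U → ℕ) : KGraph k where
  V := Fin k ⊕ U
  lab := Sum.inl
  lab_inj := Sum.inl_injective
  edges := (∑ ia : Fin k × U, Multiset.replicate (Q ia) ((Sum.inl ia.1 : Fin k ⊕ U), Sum.inr ia.2))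
      + ∑ ab ∈ Finset.univ.filter (fun ab : U × U => ab.1 ≠ ab.2),
          Multiset.replicate (P ab) ((Sum.inr ab.1 : Fin k ⊕ U), Sum.inr ab.2)
  loopless := by
    intro e he
    simp only [Multiset.mem_add, Multiset.mem_sum, Multiset.mem_replicate] at he
    rcases he with ⟨ia, _, _, rfl⟩ | ⟨ab, hab, _, rfl⟩
    · simp
    · simp only [Finset.mem_filter] at hab
      simp only [ne_eq, Sum.inr.injEq]
      exact hab.2

lemma homPhi_Fg {m k : ℕ} (α : Fin m → ℝ) (β : Fin m → Fin m → ℝ) (hα : ∀ i, 0 < α i)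
    (U : Type) [Fintype U] [DecidableEq U]
    (Q : Fin k × U → ℕ) (P : U × U → ℕ) (φ : Fin k → Fin m) :
    homPhi α β (Fg k U Q P) φ =
      ∑ y : U → Fin m, (∏ a, α (y a)) *
        ((∏ ia : Fin k × U, β (φ ia.1) (y ia.2) ^ Q ia) *
         ∏ ab ∈ Finset.univ.filter (fun ab : U × U => ab.1 ≠ ab.2),
           β (y ab.1) (y ab.2) ^ P ab) := by
  classical
  have hφne : (∏ i, α (φ i)) ≠ 0 :=
    ne_of_gt (Finset.prod_pos (fun i _ => hα (φ i)))
  rw [homPhi]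
  show (∑ ψ ∈ Finset.univ.filter (fun ψ : (Fin k ⊕ U) → Fin m => ψ ∘ Sum.inl = φ),
    ((∏ u, α (ψ u)) / ∏ i, α (φ i)) *
      ((Fg k U Q P).edges.map (fun e => β (ψ e.1) (ψ e.2))).prod) = _
  refine Finset.sum_bij' (fun ψ _ => ψ ∘ Sum.inr) (fun y _ => Sum.elim φ y)
    ?_ ?_ ?_ ?_ ?_
  · intro ψ hψ; exact Finset.mem_univ _
  · intro y hy
    simp only [Finset.mem_filter, Finset.mem_univ, true_and]
    exact Sum.elim_comp_inl φ y
  · intro ψ hψ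
    simp only [Finset.mem_filter, Finset.mem_univ, true_and] at hψ
    funext u
    cases u with
    | inl i => exact (congrFun hψ i).symm
    | inr a => rfl
  · intro y _; rfl
  · intro ψ hψ
    simp only [Finset.mem_filter, Finset.mem_univ, true_and] at hψ
    have hψl : ∀ i, ψ (Sum.inl i) = φ i := fun i => congrFun hψ i
    have hnode : (∏ u : Fin k ⊕ U, α (ψ u)) / (∏ i, α (φ i)) = ∏ a, α (ψ (Sum.inr a)) := by
      rw [Fintype.prod_sum_type]
      simp only [hψl]
      rw [mul_comm, mul_div_assoc, div_self hφne, mul_one]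
    have hedge : ((Fg k U Q P).edges.map (fun e => β (ψ e.1) (ψ e.2))).prod
        = (∏ ia : Fin k × U, β (φ ia.1) (ψ (Sum.inr ia.2)) ^ Q ia) *
          ∏ ab ∈ Finset.univ.filter (fun ab : U × U => ab.1 ≠ ab.2),
            β (ψ (Sum.inr ab.1)) (ψ (Sum.inr ab.2)) ^ P ab := by
      have hE : (Fg k U Q P).edges
          = (∑ ia : Fin k × U, Multiset.replicate (Q ia) ((Sum.inl ia.1 : Fin k ⊕ U), Sum.inr ia.2))
          + ∑ ab ∈ Finset.univ.filter (fun ab : U × U => ab.1 ≠ ab.2),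
              Multiset.replicate (P ab) ((Sum.inr ab.1 : Fin k ⊕ U), Sum.inr ab.2) := rfl
      have hE' : ((Fg k U Q P).edges.map (fun e => β (ψ e.1) (ψ e.2)))
          = Multiset.map (fun e : (Fin k ⊕ U) × (Fin k ⊕ U) => β (ψ e.1) (ψ e.2))
            ((∑ ia : Fin k × U, Multiset.replicate (Q ia) ((Sum.inl ia.1 : Fin k ⊕ U), Sum.inr ia.2))
            + ∑ ab ∈ Finset.univ.filter (fun ab : U × U => ab.1 ≠ ab.2),
                Multiset.replicate (P ab) ((Sum.inr ab.1 : Fin k ⊕ U), Sum.inr ab.2)) := rfl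
      rw [hE', Multiset.map_add, Multiset.prod_add, multiset_prod_map_sum', multiset_prod_map_sum']
      congr 1
      · exact Finset.prod_congr rfl (fun ia _ => by
          rw [Multiset.map_replicate, Multiset.prod_replicate, hψl])
      · exact Finset.prod_congr rfl (fun ab _ => by
          rw [Multiset.map_replicate, Multiset.prod_replicate])
    rw [hnode, hedge]
    rfl

variable {m : ℕ} (β : Fin m → Fin m → ℝ)

lemma exists_avoid {n : Fin m → ℕ} (h3 : ∀ v, 3 ≤ n v) (l : Fin m)
    (a b : (v : Fin m) × Fin (n v)) :
    ∃ j : Fin (n l), (⟨l, j⟩ : (v : Fin m) × Fin (n v)) ≠ a ∧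
      (⟨l, j⟩ : (v : Fin m) × Fin (n v)) ≠ b := by
  classical
  by_contra hcon
  push_neg at hcon
  -- every j gives ⟨l,j⟩ = a or = b
  have hsub : (Finset.univ.image (fun j : Fin (n l) => (⟨l, j⟩ : (v : Fin m) × Fin (n v))))
      ⊆ {a, b} := by
    intro u hu
    simp only [Finset.mem_image] at hu
    obtain ⟨j, _, rfl⟩ := hu
    rcases Classical.em ((⟨l, j⟩ : (v : Fin m) × Fin (n v)) = a) with h | h
    · simp [h]
    · simp [hcon j h]
  have hcard : n l ≤ 2 := by
    have h1 : (Finset.univ.image (fun j : Fin (n l) => (⟨l, j⟩ : (v : Fin m) × Fin (n v)))).card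
        = n l := by
      rw [Finset.card_image_of_injective _ sigma_mk_injective]
      simp
    calc n l = _ := h1.symm
    _ ≤ ({a, b} : Finset ((v : Fin m) × Fin (n v))).card := Finset.card_le_card hsub
    _ ≤ 2 := Finset.card_insert_le _ _ |>.trans (by simp)
  have := h3 l
  omega

lemma struct_lemma (htf : ∀ i j : Fin m, (∀ l, β i l = β j l) → i = j)
    {n : Fin m → ℕ} (h3 : ∀ v, 3 ≤ n v)
    (y : ((v : Fin m) × Fin (n v)) → Fin m)
    (hoff : ∀ a b : (v : Fin m) × Fin (n v), a ≠ b → β (y a) (y b) = β a.1 b.1) :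
    ∃ σ : Equiv.Perm (Fin m), (∀ u v, β (σ u) (σ v) = β u v) ∧ ∀ a, y a = σ a.1 := by
  classical
  have claim1 : ∀ a b : (v : Fin m) × Fin (n v), y a = y b → a.1 = b.1 := by
    intro a b hy
    apply htf
    intro l
    obtain ⟨j, hja, hjb⟩ := exists_avoid h3 l a b
    have e1 : β (y a) (y ⟨l, j⟩) = β a.1 l := hoff a ⟨l, j⟩ (Ne.symm hja)
    have e2 : β (y b) (y ⟨l, j⟩) = β b.1 l := hoff b ⟨l, j⟩ (Ne.symm hjb)
    rw [← e1, ← e2, hy]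
  have claim2 : ∀ a b : (v : Fin m) × Fin (n v), a.1 = b.1 → y a = y b := by
    intro a b hab
    rcases Classical.em (a = b) with rfl | hne
    · rfl
    have hc : ∀ l : Fin m, ∃ j : Fin (n l),
        (⟨l, j⟩ : (v : Fin m) × Fin (n v)) ≠ a ∧ (⟨l, j⟩ : (v : Fin m) × Fin (n v)) ≠ b :=
      fun l => exists_avoid h3 l a b
    choose j hja hjb using hc
    have hinj : Function.Injective (fun l : Fin m => y ⟨l, j l⟩) := by
      intro l l' hll
      exact claim1 ⟨l, j l⟩ ⟨l', j l'⟩ hll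
    have hsurj : Function.Surjective (fun l : Fin m => y ⟨l, j l⟩) :=
      Finite.surjective_of_injective hinj
    apply htf
    intro t
    obtain ⟨l, hl⟩ := hsurj t
    simp only at hl
    have e1 : β (y a) (y ⟨l, j l⟩) = β a.1 l := hoff a ⟨l, j l⟩ (Ne.symm (hja l))
    have e2 : β (y b) (y ⟨l, j l⟩) = β b.1 l := hoff b ⟨l, j l⟩ (Ne.symm (hjb l))
    rw [← hl, e1, e2, hab]
  have h0 : ∀ v, 0 < n v := fun v => lt_of_lt_of_le (by norm_num) (h3 v)
  have h1 : ∀ v, 1 < n v := fun v => lt_of_lt_of_le (by norm_num) (h3 v)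
  have hginj : Function.Injective (fun v : Fin m => y ⟨v, ⟨0, h0 v⟩⟩) := by
    intro v w hvw
    exact claim1 _ _ hvw
  have hybij := Finite.injective_iff_bijective.mp hginj
  refine ⟨Equiv.ofBijective _ hybij, ?_, ?_⟩
  · intro u v
    show β (y ⟨u, ⟨0, h0 u⟩⟩) (y ⟨v, ⟨0, h0 v⟩⟩) = β u v
    rcases Classical.em (u = v) with rfl | huv
    · have hne : (⟨u, ⟨0, h0 u⟩⟩ : (v : Fin m) × Fin (n v)) ≠ ⟨u, ⟨1, h1 u⟩⟩ := by
        intro hcon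
        have := congrArg (fun a : (v : Fin m) × Fin (n v) => (a.2 : ℕ)) hcon
        simp at this
      have h01 : y (⟨u, ⟨1, h1 u⟩⟩ : (v : Fin m) × Fin (n v)) = y ⟨u, ⟨0, h0 u⟩⟩ :=
        claim2 _ _ rfl
      have := hoff _ _ hne
      rw [h01] at this
      exact this
    · have hne : (⟨u, ⟨0, h0 u⟩⟩ : (v : Fin m) × Fin (n v)) ≠ ⟨v, ⟨0, h0 v⟩⟩ := by
        intro hcon
        exact huv (congrArg Sigma.fst hcon)
      exact hoff _ _ hne
  · intro a
    show y a = y ⟨a.1, ⟨0, h0 a.1⟩⟩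
    exact claim2 a ⟨a.1, ⟨0, h0 a.1⟩⟩ rfl

lemma reindex {k : ℕ} (α : Fin m → ℝ)
    (htf : ∀ i j : Fin m, (∀ l, β i l = β j l) → i = j)
    {n : Fin m → ℕ} (h3 : ∀ v, 3 ≤ n v)
    (χ φ : Fin k → Fin m) :
    ∑ y ∈ Finset.univ.filter (fun y : ((v : Fin m) × Fin (n v)) → Fin m =>
        (∀ ia : Fin k × ((v : Fin m) × Fin (n v)), β (χ ia.1) (y ia.2) = β (φ ia.1) ia.2.1) ∧
        ∀ ab : ((v : Fin m) × Fin (n v)) × ((v : Fin m) × Fin (n v)), ab.1 ≠ ab.2 →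
          β (y ab.1) (y ab.2) = β ab.1.1 ab.2.1),
      ∏ a, α (y a)
    = ∑ σ ∈ Finset.univ.filter (fun σ : Equiv.Perm (Fin m) =>
        (∀ u v, β (σ u) (σ v) = β u v) ∧ ∀ i v, β (χ i) (σ v) = β (φ i) v),
      ∏ v, α (σ v) ^ n v := by
  classical
  have h0 : ∀ v, 0 < n v := fun v => lt_of_lt_of_le (by norm_num) (h3 v)
  have hset : Finset.univ.filter (fun y : ((v : Fin m) × Fin (n v)) → Fin m =>
        (∀ ia : Fin k × ((v : Fin m) × Fin (n v)), β (χ ia.1) (y ia.2) = β (φ ia.1) ia.2.1) ∧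
        ∀ ab : ((v : Fin m) × Fin (n v)) × ((v : Fin m) × Fin (n v)), ab.1 ≠ ab.2 →
          β (y ab.1) (y ab.2) = β ab.1.1 ab.2.1)
      = (Finset.univ.filter (fun σ : Equiv.Perm (Fin m) =>
          (∀ u v, β (σ u) (σ v) = β u v) ∧ ∀ i v, β (χ i) (σ v) = β (φ i) v)).image
          (fun σ => fun a : (v : Fin m) × Fin (n v) => σ a.1) := by
    ext y
    simp only [Finset.mem_filter, Finset.mem_univ, true_and, Finset.mem_image]
    constructor
    · rintro ⟨hlab, hoff⟩
      obtain ⟨σ, hβσ, hyσ⟩ := struct_lemma β htf h3 y (fun a b hab => hoff (a, b) hab)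
      refine ⟨σ, ⟨hβσ, fun i v => ?_⟩, ?_⟩
      · have := hlab (i, ⟨v, ⟨0, h0 v⟩⟩)
        rw [hyσ ⟨v, ⟨0, h0 v⟩⟩] at this
        exact this
      · funext a
        exact (hyσ a).symm
    · rintro ⟨σ, ⟨hβσ, hlabσ⟩, rfl⟩
      exact ⟨fun ia => hlabσ ia.1 ia.2.1, fun ab _ => hβσ ab.1.1 ab.2.1⟩
  rw [hset, Finset.sum_image ?hinj]
  case hinj =>
    intro σ _ τ _ hστ
    exact Equiv.ext fun v => congrFun hστ ⟨v, ⟨0, h0 v⟩⟩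
  apply Finset.sum_congr rfl
  intro σ _
  rw [← Finset.univ_sigma_univ, Finset.prod_sigma]
  apply Finset.prod_congr rfl
  intro v _
  simp

lemma sum_filter_sum_type {A B M : Type} [Fintype A] [Fintype B] [AddCommMonoid M]
    (p : A ⊕ B → Prop) [DecidablePred p] (f : A ⊕ B → M) :
    ∑ s ∈ Finset.univ.filter p, f s
      = (∑ a ∈ Finset.univ.filter (fun a => p (Sum.inl a)), f (Sum.inl a))
      + ∑ b ∈ Finset.univ.filter (fun b => p (Sum.inr b)), f (Sum.inr b) := by
  classical
  rw [Finset.sum_filter, Finset.sum_filter, Finset.sum_filter, Fintype.sum_sum_type]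

lemma stepA {k : ℕ} (α : Fin m → ℝ)
    (hα : ∀ i, 0 < α i)
    (htf : ∀ i j : Fin m, (∀ l, β i l = β j l) → i = j)
    (φ ψ : Fin k → Fin m)
    (h : ∀ F : KGraph k, homPhi α β F φ = homPhi α β F ψ)
    (hm : 0 < m) {n : Fin m → ℕ} (h3 : ∀ v, 3 ≤ n v) :
    ∑ σ ∈ Finset.univ.filter (fun σ : Equiv.Perm (Fin m) =>
        (∀ u v, β (σ u) (σ v) = β u v) ∧ ∀ i v, β (φ i) (σ v) = β (φ i) v),
      ∏ v, α (σ v) ^ n v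
    = ∑ σ ∈ Finset.univ.filter (fun σ : Equiv.Perm (Fin m) =>
        (∀ u v, β (σ u) (σ v) = β u v) ∧ ∀ i v, β (ψ i) (σ v) = β (φ i) v),
      ∏ v, α (σ v) ^ n v := by
  classical
  have h0 : ∀ v, 0 < n v := fun v => lt_of_lt_of_le (by norm_num) (h3 v)
  haveI hne : Nonempty ((Fin k × ((v : Fin m) × Fin (n v))) ⊕
      (((v : Fin m) × Fin (n v)) × ((v : Fin m) × Fin (n v)))) :=
    ⟨Sum.inr (⟨⟨0, hm⟩, ⟨0, h0 _⟩⟩, ⟨⟨0, hm⟩, ⟨0, h0 _⟩⟩)⟩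
  set xx : (Fin k → Fin m) → (((v : Fin m) × Fin (n v)) → Fin m) →
      ((Fin k × ((v : Fin m) × Fin (n v))) ⊕
       (((v : Fin m) × Fin (n v)) × ((v : Fin m) × Fin (n v)))) → ℝ :=
    fun χ y => Sum.elim (fun ia => β (χ ia.1) (y ia.2))
      (fun ab => if ab.1 = ab.2 then 1 else β (y ab.1) (y ab.2)) with hxx
  set x : ((((v : Fin m) × Fin (n v)) → Fin m) ⊕ (((v : Fin m) × Fin (n v)) → Fin m)) →
      ((Fin k × ((v : Fin m) × Fin (n v))) ⊕
       (((v : Fin m) × Fin (n v)) × ((v : Fin m) × Fin (n v)))) → ℝ :=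
    Sum.elim (xx φ) (xx ψ) with hx
  set c : ((((v : Fin m) × Fin (n v)) → Fin m) ⊕ (((v : Fin m) × Fin (n v)) → Fin m)) → ℝ :=
    Sum.elim (fun y => ∏ a, α (y a)) (fun y => -(∏ a, α (y a))) with hc
  have hxprod : ∀ (nn : _ → ℕ) (χ : Fin k → Fin m) (y : ((v : Fin m) × Fin (n v)) → Fin m),
      (∏ i, xx χ y i ^ nn i)
      = (∏ ia : Fin k × ((v : Fin m) × Fin (n v)), β (χ ia.1) (y ia.2) ^ nn (Sum.inl ia)) *
        ∏ ab ∈ Finset.univ.filter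
            (fun ab : ((v : Fin m) × Fin (n v)) × ((v : Fin m) × Fin (n v)) => ab.1 ≠ ab.2),
          β (y ab.1) (y ab.2) ^ nn (Sum.inr ab) := by
    intro nn χ y
    rw [Fintype.prod_sum_type]
    congr 1
    rw [Finset.prod_filter]
    apply Finset.prod_congr rfl
    intro ab _
    by_cases hab : ab.1 = ab.2 <;> simp [hxx, hab]
  have hmom : ∀ nn : ((Fin k × ((v : Fin m) × Fin (n v))) ⊕
      (((v : Fin m) × Fin (n v)) × ((v : Fin m) × Fin (n v)))) → ℕ,
      ∑ s, c s * ∏ i, x s i ^ nn i = 0 := by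
    intro nn
    rw [Fintype.sum_sum_type]
    have h1 : ∀ (χ : Fin k → Fin m),
        ∑ y : ((v : Fin m) × Fin (n v)) → Fin m, (∏ a, α (y a)) * ∏ i, xx χ y i ^ nn i
        = homPhi α β (Fg k ((v : Fin m) × Fin (n v))
            (fun ia => nn (Sum.inl ia)) (fun ab => nn (Sum.inr ab))) χ := by
      intro χ
      rw [homPhi_Fg α β hα]
      exact Finset.sum_congr rfl (fun y _ => by rw [hxprod])
    have e1 : ∀ y : ((v : Fin m) × Fin (n v)) → Fin m,
        c (Sum.inl y) * ∏ i, x (Sum.inl y) i ^ nn i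
        = (∏ a, α (y a)) * ∏ i, xx φ y i ^ nn i := by
      intro y; simp [hc, hx]
    have e2 : ∀ y : ((v : Fin m) × Fin (n v)) → Fin m,
        c (Sum.inr y) * ∏ i, x (Sum.inr y) i ^ nn i
        = -((∏ a, α (y a)) * ∏ i, xx ψ y i ^ nn i) := by
      intro y; simp [hc, hx]
    rw [Finset.sum_congr rfl (fun y _ => e1 y), Finset.sum_congr rfl (fun y _ => e2 y),
      Finset.sum_neg_distrib, h1 φ, h1 ψ, h _, add_neg_cancel]
  have hmain := moment_lemma x c hmom (Sum.inl (fun a => a.1))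
  rw [sum_filter_sum_type] at hmain
  have hcond : ∀ (χ : Fin k → Fin m) (y : ((v : Fin m) × Fin (n v)) → Fin m),
      (xx χ y = xx φ (fun a => a.1)) ↔
      ((∀ ia : Fin k × ((v : Fin m) × Fin (n v)), β (χ ia.1) (y ia.2) = β (φ ia.1) ia.2.1) ∧
       ∀ ab : ((v : Fin m) × Fin (n v)) × ((v : Fin m) × Fin (n v)), ab.1 ≠ ab.2 →
         β (y ab.1) (y ab.2) = β ab.1.1 ab.2.1) := by
    intro χ y
    constructor
    · intro he
      constructor
      · intro ia
        have := congrFun he (Sum.inl ia)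
        simpa [hxx] using this
      · intro ab hab
        have := congrFun he (Sum.inr ab)
        simpa [hxx, if_neg hab] using this
    · rintro ⟨ha, hb⟩
      funext i
      cases i with
      | inl ia => simpa [hxx] using ha ia
      | inr ab =>
        by_cases hab : ab.1 = ab.2
        · simp [hxx, hab]
        · simpa [hxx, if_neg hab] using hb ab hab
  have hfl : Finset.univ.filter
        (fun y : ((v : Fin m) × Fin (n v)) → Fin m => x (Sum.inl y) = x (Sum.inl (fun a => a.1)))
      = Finset.univ.filter (fun y : ((v : Fin m) × Fin (n v)) → Fin m =>
        (∀ ia : Fin k × ((v : Fin m) × Fin (n v)), β (φ ia.1) (y ia.2) = β (φ ia.1) ia.2.1) ∧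
       ∀ ab : ((v : Fin m) × Fin (n v)) × ((v : Fin m) × Fin (n v)), ab.1 ≠ ab.2 →
         β (y ab.1) (y ab.2) = β ab.1.1 ab.2.1) := by
    apply Finset.filter_congr
    intro y _
    simpa [hx] using hcond φ y
  have hfr : Finset.univ.filter
        (fun y : ((v : Fin m) × Fin (n v)) → Fin m => x (Sum.inr y) = x (Sum.inl (fun a => a.1)))
      = Finset.univ.filter (fun y : ((v : Fin m) × Fin (n v)) → Fin m =>
        (∀ ia : Fin k × ((v : Fin m) × Fin (n v)), β (ψ ia.1) (y ia.2) = β (φ ia.1) ia.2.1) ∧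
       ∀ ab : ((v : Fin m) × Fin (n v)) × ((v : Fin m) × Fin (n v)), ab.1 ≠ ab.2 →
         β (y ab.1) (y ab.2) = β ab.1.1 ab.2.1) := by
    apply Finset.filter_congr
    intro y _
    simpa [hx] using hcond ψ y
  rw [hfl, hfr] at hmain
  simp only [hc, Sum.elim_inl, Sum.elim_inr, Finset.sum_neg_distrib] at hmain
  have hfin := add_neg_eq_zero.mp hmain
  rw [← reindex β α htf h3 φ φ, ← reindex β α htf h3 ψ φ]
  exact hfin

end AuxLemmas

/-- Lemma 3: if `G` is twin-free and `hom_φ(F,G) = hom_ψ(F,G)` for all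
`k`-labeled graphs `F`, then `ψ = σ ∘ φ` for some automorphism `σ` of `G`. -/
theorem homPhi_eq_implies_aut {m k : ℕ} (α : Fin m → ℝ) (β : Fin m → Fin m → ℝ)
    (hα : ∀ i, 0 < α i) (hβ : ∀ i j, β i j = β j i)
    (htf : ∀ i j : Fin m, (∀ l, β i l = β j l) → i = j)
    (φ ψ : Fin k → Fin m)
    (h : ∀ F : KGraph k, homPhi α β F φ = homPhi α β F ψ) :
    ∃ σ : Equiv.Perm (Fin m), IsAut α β σ ∧ ψ = ⇑σ ∘ φ := by
  classical
  rcases Nat.eq_zero_or_pos m with hm | hm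
  · subst hm
    exact ⟨Equiv.refl _, ⟨fun v => v.elim0, fun u v => u.elim0⟩,
      funext fun i => (ψ i).elim0⟩
  haveI : Nonempty (Fin m) := ⟨⟨0, hm⟩⟩
  set x : (Equiv.Perm (Fin m) ⊕ Equiv.Perm (Fin m)) → Fin m → ℝ :=
    Sum.elim (fun σ v => α (σ v)) (fun σ v => α (σ v)) with hx
  set c : (Equiv.Perm (Fin m) ⊕ Equiv.Perm (Fin m)) → ℝ :=
    Sum.elim
      (fun σ => if ((∀ u v, β (σ u) (σ v) = β u v) ∧ ∀ i v, β (φ i) (σ v) = β (φ i) v)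
        then ∏ v, α (σ v) ^ 3 else 0)
      (fun σ => -(if ((∀ u v, β (σ u) (σ v) = β u v) ∧ ∀ i v, β (ψ i) (σ v) = β (φ i) v)
        then ∏ v, α (σ v) ^ 3 else 0)) with hc
  have hmom : ∀ e : Fin m → ℕ, ∑ s, c s * ∏ v, x s v ^ e v = 0 := by
    intro e
    have hA := stepA β α hα htf φ ψ h hm (n := fun v => 3 + e v)
      (fun v => Nat.le_add_right 3 (e v))
    have hA' : ∑ σ ∈ Finset.univ.filter (fun σ : Equiv.Perm (Fin m) =>
          (∀ u v, β (σ u) (σ v) = β u v) ∧ ∀ i v, β (φ i) (σ v) = β (φ i) v),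
          ∏ v, α (σ v) ^ (3 + e v)
        = ∑ σ ∈ Finset.univ.filter (fun σ : Equiv.Perm (Fin m) =>
          (∀ u v, β (σ u) (σ v) = β u v) ∧ ∀ i v, β (ψ i) (σ v) = β (φ i) v),
          ∏ v, α (σ v) ^ (3 + e v) := hA
    rw [Fintype.sum_sum_type]
    have t1 : ∑ σ : Equiv.Perm (Fin m), c (Sum.inl σ) * ∏ v, x (Sum.inl σ) v ^ e v
        = ∑ σ ∈ Finset.univ.filter (fun σ : Equiv.Perm (Fin m) =>
          (∀ u v, β (σ u) (σ v) = β u v) ∧ ∀ i v, β (φ i) (σ v) = β (φ i) v),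
          ∏ v, α (σ v) ^ (3 + e v) := by
      rw [Finset.sum_filter]
      apply Finset.sum_congr rfl
      intro σ _
      show (if ((∀ u v, β (σ u) (σ v) = β u v) ∧ ∀ i v, β (φ i) (σ v) = β (φ i) v)
          then ∏ v, α (σ v) ^ 3 else 0) * ∏ v, α (σ v) ^ e v
        = if ((∀ u v, β (σ u) (σ v) = β u v) ∧ ∀ i v, β (φ i) (σ v) = β (φ i) v)
          then ∏ v, α (σ v) ^ (3 + e v) else 0
      by_cases hp : (∀ u v, β (σ u) (σ v) = β u v) ∧ ∀ i v, β (φ i) (σ v) = β (φ i) v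
      · rw [if_pos hp, if_pos hp, ← Finset.prod_mul_distrib]
        exact Finset.prod_congr rfl (fun v _ => (pow_add _ 3 (e v)).symm)
      · rw [if_neg hp, if_neg hp, zero_mul]
    have t2 : ∑ σ : Equiv.Perm (Fin m), c (Sum.inr σ) * ∏ v, x (Sum.inr σ) v ^ e v
        = -∑ σ ∈ Finset.univ.filter (fun σ : Equiv.Perm (Fin m) =>
          (∀ u v, β (σ u) (σ v) = β u v) ∧ ∀ i v, β (ψ i) (σ v) = β (φ i) v),
          ∏ v, α (σ v) ^ (3 + e v) := by
      rw [← Finset.sum_neg_distrib, Finset.sum_filter]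
      apply Finset.sum_congr rfl
      intro σ _
      show (-(if ((∀ u v, β (σ u) (σ v) = β u v) ∧ ∀ i v, β (ψ i) (σ v) = β (φ i) v)
          then ∏ v, α (σ v) ^ 3 else 0)) * ∏ v, α (σ v) ^ e v
        = (if ((∀ u v, β (σ u) (σ v) = β u v) ∧ ∀ i v, β (ψ i) (σ v) = β (φ i) v)
          then -(∏ v, α (σ v) ^ (3 + e v)) else 0)
      by_cases hp : (∀ u v, β (σ u) (σ v) = β u v) ∧ ∀ i v, β (ψ i) (σ v) = β (φ i) v
      · rw [if_pos hp, if_pos hp, neg_mul, ← Finset.prod_mul_distrib]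
        exact congrArg Neg.neg (Finset.prod_congr rfl (fun v _ => (pow_add _ 3 (e v)).symm))
      · rw [if_neg hp, if_neg hp, neg_zero, zero_mul]
    rw [t1, t2, hA', add_neg_cancel]
  have hmain := moment_lemma x c hmom (Sum.inl (Equiv.refl (Fin m)))
  rw [sum_filter_sum_type] at hmain
  simp only [hc, Sum.elim_inl, Sum.elim_inr, Finset.sum_neg_distrib] at hmain
  have heq0 := add_neg_eq_zero.mp hmain
  rw [Finset.sum_filter, Finset.sum_filter] at heq0
  have heq : ∑ σ ∈ Finset.univ.filter (fun σ : Equiv.Perm (Fin m) =>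
        x (Sum.inl σ) = x (Sum.inl (Equiv.refl (Fin m))) ∧
        ((∀ u v, β (σ u) (σ v) = β u v) ∧ ∀ i v, β (φ i) (σ v) = β (φ i) v)),
        ∏ v, α (σ v) ^ 3
      = ∑ σ ∈ Finset.univ.filter (fun σ : Equiv.Perm (Fin m) =>
        x (Sum.inr σ) = x (Sum.inl (Equiv.refl (Fin m))) ∧
        ((∀ u v, β (σ u) (σ v) = β u v) ∧ ∀ i v, β (ψ i) (σ v) = β (φ i) v)),
        ∏ v, α (σ v) ^ 3 := by
    rw [Finset.sum_filter, Finset.sum_filter]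
    refine Eq.trans ?_ (heq0.trans ?_)
    · apply Finset.sum_congr rfl
      intro σ _
      by_cases h1 : x (Sum.inl σ) = x (Sum.inl (Equiv.refl (Fin m))) <;>
        by_cases h2 : (∀ u v, β (σ u) (σ v) = β u v) ∧ ∀ i v, β (φ i) (σ v) = β (φ i) v <;>
        simp [h1, h2]
    · apply Finset.sum_congr rfl
      intro σ _
      by_cases h1 : x (Sum.inr σ) = x (Sum.inl (Equiv.refl (Fin m))) <;>
        by_cases h2 : (∀ u v, β (σ u) (σ v) = β u v) ∧ ∀ i v, β (ψ i) (σ v) = β (φ i) v <;>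
        simp [h1, h2]
  have hpos : (0:ℝ) < ∑ σ ∈ Finset.univ.filter (fun σ : Equiv.Perm (Fin m) =>
        x (Sum.inl σ) = x (Sum.inl (Equiv.refl (Fin m))) ∧
        ((∀ u v, β (σ u) (σ v) = β u v) ∧ ∀ i v, β (φ i) (σ v) = β (φ i) v)),
        ∏ v, α (σ v) ^ 3 := by
    apply Finset.sum_pos'
    · intro σ _
      exact le_of_lt (Finset.prod_pos (fun v _ => pow_pos (hα _) 3))
    · refine ⟨Equiv.refl (Fin m), ?_, Finset.prod_pos (fun v _ => pow_pos (hα _) 3)⟩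
      rw [Finset.mem_filter]
      exact ⟨Finset.mem_univ _, rfl, ⟨fun u v => by simp, fun i v => by simp⟩⟩
  rw [heq] at hpos
  have hnonempty : ∃ σ : Equiv.Perm (Fin m),
      (x (Sum.inr σ) = x (Sum.inl (Equiv.refl (Fin m)))) ∧
      ((∀ u v, β (σ u) (σ v) = β u v) ∧ ∀ i v, β (ψ i) (σ v) = β (φ i) v) := by
    by_contra hcon
    have hemp : Finset.univ.filter (fun σ : Equiv.Perm (Fin m) =>
        x (Sum.inr σ) = x (Sum.inl (Equiv.refl (Fin m))) ∧
        ((∀ u v, β (σ u) (σ v) = β u v) ∧ ∀ i v, β (ψ i) (σ v) = β (φ i) v)) = ∅ := by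
      apply Finset.filter_false_of_mem
      intro σ _ hcond
      exact hcon ⟨σ, hcond⟩
    rw [hemp] at hpos
    simp at hpos
  obtain ⟨σ, hfun, hβaut, hlab⟩ := hnonempty
  refine ⟨σ, ⟨fun v => by simpa [hx] using congrFun hfun v, hβaut⟩, ?_⟩
  funext i
  show ψ i = σ (φ i)
  apply htf
  intro l
  obtain ⟨v, rfl⟩ := σ.surjective l
  rw [hlab i v, hβaut (φ i) v]
end

section
/- Let G be a twin-free weighted graph. A vector f: V(G)^k → ℝ lies in the column space of the matrix N(k,G) (columns indexed by k-labeled graphs F, with the F-column being φ ↦ hom_φ(F,G)) if and only if f is invariant under automorphisms of G, i.e., f(σ∘φ) = f(φ) for all σ ∈ Aut(G) and φ ∈ V(G)^k. -/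
open scoped BigOperators Classical

section Aux

open Finset in
lemma keyLA {I I' P : Type} [Fintype I] [Fintype I'] [Fintype P]
    (a : I → ℝ) (a' : I' → ℝ) (u : I → P → ℝ) (v : I' → P → ℝ)
    (tstar : P → ℝ) (S : Finset ℝ)
    (hu : ∀ i p, u i p ∈ S) (hv : ∀ i p, v i p ∈ S) (ht : ∀ p, tstar p ∈ S)
    (hmom : ∀ c : P → ℕ,
      ∑ i, a i * ∏ p, u i p ^ c p = ∑ i', a' i' * ∏ p, v i' p ^ c p) :
    ∑ i ∈ univ.filter (fun i => u i = tstar), a i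
      = ∑ i' ∈ univ.filter (fun i' => v i' = tstar), a' i' := by
  classical
  set q : P → Polynomial ℝ :=
    fun p => ∏ s ∈ S.erase (tstar p), (Polynomial.X - Polynomial.C s) with hqdef
  set D := S.card + 1 with hD
  have hdeg : ∀ p, (q p).natDegree < D := by
    intro p
    simp only [hqdef]
    have h1 := Polynomial.natDegree_prod_le (S.erase (tstar p))
      (fun s => Polynomial.X - Polynomial.C s)
    have h2 : ∑ s ∈ S.erase (tstar p), (Polynomial.X - Polynomial.C s).natDegree
        ≤ (S.erase (tstar p)).card := by
      apply le_trans (Finset.sum_le_card_nsmul _ _ 1 ?_)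
      · simp
      · intro x _; simp [Polynomial.natDegree_X_sub_C]
    have h3 : (S.erase (tstar p)).card ≤ S.card := Finset.card_erase_le
    omega
  set g : (P → ℝ) → ℝ := fun t => ∏ p, (q p).eval (t p) with hgdef
  have hgval : ∀ t : P → ℝ, g t = ∏ p, ∏ s ∈ S.erase (tstar p), (t p - s) := by
    intro t; simp [hgdef, hqdef, Polynomial.eval_prod]
  have hgstar : g tstar ≠ 0 := by
    rw [hgval]
    apply Finset.prod_ne_zero_iff.2
    intro p _
    apply Finset.prod_ne_zero_iff.2
    intro s hs
    have := Finset.ne_of_mem_erase hs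
    exact sub_ne_zero.2 (Ne.symm this)
  have hg0 : ∀ t : P → ℝ, (∀ p, t p ∈ S) → t ≠ tstar → g t = 0 := by
    intro t htS htn
    rw [hgval]
    obtain ⟨p0, hp0⟩ : ∃ p, t p ≠ tstar p := by
      by_contra h; push_neg at h; exact htn (funext h)
    apply Finset.prod_eq_zero (Finset.mem_univ p0)
    apply Finset.prod_eq_zero (Finset.mem_erase.2 ⟨hp0, htS p0⟩)
    simp
  -- expansion
  have hgexp : ∀ {J : Type} [Fintype J] (b : J → ℝ) (w : J → P → ℝ),
      ∑ i, b i * g (w i)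
        = ∑ c ∈ Fintype.piFinset (fun _ : P => range D),
            (∏ p, (q p).coeff (c p)) * (∑ i, b i * ∏ p, w i p ^ c p) := by
    intro J _ b w
    have h1 : ∀ i, g (w i)
        = ∑ c ∈ Fintype.piFinset (fun _ : P => range D),
            (∏ p, (q p).coeff (c p)) * ∏ p, w i p ^ c p := by
      intro i
      have : g (w i) = ∏ p, ∑ j ∈ range D, (q p).coeff j * w i p ^ j := by
        simp only [hgdef]
        exact Finset.prod_congr rfl fun p _ =>
          Polynomial.eval_eq_sum_range' (hdeg p) _
      rw [this, Finset.prod_univ_sum]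
      exact Finset.sum_congr rfl fun c _ => by rw [Finset.prod_mul_distrib]
    calc ∑ i, b i * g (w i)
        = ∑ i, ∑ c ∈ Fintype.piFinset (fun _ : P => range D),
            b i * ((∏ p, (q p).coeff (c p)) * ∏ p, w i p ^ c p) := by
          refine Finset.sum_congr rfl fun i _ => ?_
          rw [h1 i, Finset.mul_sum]
      _ = ∑ c ∈ Fintype.piFinset (fun _ : P => range D),
            ∑ i, b i * ((∏ p, (q p).coeff (c p)) * ∏ p, w i p ^ c p) :=
          Finset.sum_comm
      _ = _ := by
          refine Finset.sum_congr rfl fun c _ => ?_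
          rw [Finset.mul_sum]
          exact Finset.sum_congr rfl fun i _ => by ring
  have hmain : ∑ i, a i * g (u i) = ∑ i', a' i' * g (v i') := by
    rw [hgexp, hgexp]
    exact Finset.sum_congr rfl fun c _ => by rw [hmom c]
  have hL : ∑ i, a i * g (u i) = (∑ i ∈ univ.filter (fun i => u i = tstar), a i) * g tstar := by
    rw [Finset.sum_filter, Finset.sum_mul]
    refine Finset.sum_congr rfl fun i _ => ?_
    by_cases h : u i = tstar
    · rw [if_pos h, h]
    · rw [if_neg h, hg0 (u i) (hu i) h, zero_mul, mul_zero]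
  have hR : ∑ i', a' i' * g (v i') = (∑ i' ∈ univ.filter (fun i' => v i' = tstar), a' i') * g tstar := by
    rw [Finset.sum_filter, Finset.sum_mul]
    refine Finset.sum_congr rfl fun i _ => ?_
    by_cases h : v i = tstar
    · rw [if_pos h, h]
    · rw [if_neg h, hg0 (v i) (hv i) h, zero_mul, mul_zero]
  have := hL.symm.trans (hmain.trans hR)
  exact mul_right_cancel₀ hgstar this

open Finset

section Gadget
variable {k m : ℕ}

noncomputable def mcol (α : Fin m → ℝ) (β : Fin m → Fin m → ℝ) {J : Type} [Fintype J] [DecidableEq J]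
    (E : Multiset ((Fin k ⊕ J) × (Fin k ⊕ J))) (φ : Fin k → Fin m) : ℝ :=
  ∑ ω : J → Fin m, (∏ j, α (ω j)) *
    (E.map (fun e => β (Sum.elim φ ω e.1) (Sum.elim φ ω e.2))).prod

def gadget (k : ℕ) {J : Type} [Fintype J] [DecidableEq J]
    (E : Multiset ((Fin k ⊕ J) × (Fin k ⊕ J))) (hE : ∀ e ∈ E, e.1 ≠ e.2) : KGraph k :=
  ⟨Fin k ⊕ J, Sum.inl, Sum.inl_injective, E, hE⟩

lemma homPhi_gadget (α : Fin m → ℝ) (β : Fin m → Fin m → ℝ) (hα : ∀ i, 0 < α i)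
    {J : Type} [Fintype J] [DecidableEq J]
    (E : Multiset ((Fin k ⊕ J) × (Fin k ⊕ J))) (hE : ∀ e ∈ E, e.1 ≠ e.2)
    (φ : Fin k → Fin m) :
    homPhi α β (gadget k E hE) φ = mcol α β E φ := by
  classical
  show (∑ ψ ∈ Finset.univ.filter (fun ψ : (Fin k ⊕ J) → Fin m => ψ ∘ Sum.inl = φ),
      ((∏ u, α (ψ u)) / ∏ i, α (φ i)) * (E.map (fun e => β (ψ e.1) (ψ e.2))).prod)
      = mcol α β E φ
  rw [mcol]
  refine Finset.sum_bij' (fun ψ _ => ψ ∘ Sum.inr) (fun ω _ => Sum.elim φ ω)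
    (fun ψ _ => Finset.mem_univ _) ?_ ?_ ?_ ?_
  · intro ω _
    simp only [Finset.mem_filter, Finset.mem_univ, true_and]
    rfl
  · intro ψ hψ
    simp only [Finset.mem_filter, Finset.mem_univ, true_and] at hψ
    funext x
    cases x with
    | inl i => exact (congrFun hψ i).symm
    | inr j => rfl
  · intro ω _
    rfl
  · intro ψ hψ
    simp only [Finset.mem_filter, Finset.mem_univ, true_and] at hψ
    have hcomp : ∀ u : Fin k ⊕ J, ψ u = Sum.elim φ (ψ ∘ Sum.inr) u := by
      intro u; cases u with
      | inl i => exact congrFun hψ i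
      | inr j => rfl
    have h1 : (∏ u, α (ψ u)) = (∏ i, α (φ i)) * ∏ j, α (ψ (Sum.inr j)) := by
      rw [Fintype.prod_sum_type]
      congr 1
      exact Finset.prod_congr rfl fun i _ => congrArg α (congrFun hψ i)
    have hD : (∏ i, α (φ i)) ≠ 0 :=
      Finset.prod_ne_zero_iff.2 fun i _ => (hα (φ i)).ne'
    rw [h1]
    rw [mul_comm (∏ i, α (φ i)), mul_div_assoc, div_self hD, mul_one]
    congr 1
    congr 1
    apply Multiset.map_congr rfl
    intro e _
    rw [hcomp e.1, hcomp e.2]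

end Gadget

section Mono
variable {k m : ℕ}

lemma map_sum_replicate_prod {A B : Type} (s : Finset A) (c : A → ℕ) (gv : A → B)
    (f : B → ℝ) :
    (((∑ p ∈ s, Multiset.replicate (c p) (gv p))).map f).prod
      = ∏ p ∈ s, f (gv p) ^ c p := by
  classical
  induction s using Finset.induction with
  | empty => simp
  | insert _ _ hx ih =>
    rw [Finset.sum_insert hx, Multiset.map_add, Multiset.prod_add,
      Finset.prod_insert hx, ih]
    simp [Multiset.map_replicate, Multiset.prod_replicate]

lemma mem_sum_replicate {A B : Type} (s : Finset A) (c : A → ℕ) (gv : A → B)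
    (e : B) (he : e ∈ ∑ p ∈ s, Multiset.replicate (c p) (gv p)) :
    ∃ p ∈ s, e = gv p := by
  classical
  induction s using Finset.induction with
  | empty => simp at he
  | insert _ _ hx ih =>
    rename_i x s'
    rw [Finset.sum_insert hx, Multiset.mem_add] at he
    rcases he with h | h
    · exact ⟨x, Finset.mem_insert_self _ _, Multiset.eq_of_mem_replicate h⟩
    · obtain ⟨p, hp, hpe⟩ := ih h
      exact ⟨p, Finset.mem_insert_of_mem hp, hpe⟩

noncomputable def Emono {J : Type} [Fintype J] [DecidableEq J]
    (c : {e : (Fin k ⊕ J) × (Fin k ⊕ J) // e.1 ≠ e.2} → ℕ) :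
    Multiset ((Fin k ⊕ J) × (Fin k ⊕ J)) :=
  ∑ p : {e : (Fin k ⊕ J) × (Fin k ⊕ J) // e.1 ≠ e.2}, Multiset.replicate (c p) p.val

lemma Emono_loopless {J : Type} [Fintype J] [DecidableEq J]
    (c : {e : (Fin k ⊕ J) × (Fin k ⊕ J) // e.1 ≠ e.2} → ℕ) :
    ∀ e ∈ (Emono (k := k) c), e.1 ≠ e.2 := by
  intro e he
  obtain ⟨p, _, rfl⟩ := mem_sum_replicate _ _ _ _ he
  exact p.2

lemma mcol_Emono (α : Fin m → ℝ) (β : Fin m → Fin m → ℝ) {J : Type} [Fintype J]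
    [DecidableEq J]
    (c : {e : (Fin k ⊕ J) × (Fin k ⊕ J) // e.1 ≠ e.2} → ℕ) (φ : Fin k → Fin m) :
    mcol α β (Emono c) φ
      = ∑ ω : J → Fin m, (∏ j, α (ω j)) *
          ∏ p : {e : (Fin k ⊕ J) × (Fin k ⊕ J) // e.1 ≠ e.2},
            β (Sum.elim φ ω p.val.1) (Sum.elim φ ω p.val.2) ^ c p := by
  rw [mcol]
  refine Finset.sum_congr rfl fun ω _ => ?_
  congr 1
  rw [Emono, map_sum_replicate_prod (gv := Subtype.val)]
end Mono

section Char
variable {k m : ℕ}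

/-- unlabeled vertex set for the separation gadgets -/
abbrev Jc (m : ℕ) (c : Fin m → ℕ) : Type := (Fin 3 × Fin m) ⊕ (Σ w : Fin m, Fin (c w))

def yc {m : ℕ} {c : Fin m → ℕ} : Jc m c → Fin m :=
  Sum.elim (fun q => q.2) (fun e => e.1)

def PAT {k m : ℕ} (β : Fin m → Fin m → ℝ) {J : Type} (ψ : Fin k → Fin m)
    (y : J → Fin m) (χ : Fin k → Fin m) (ω : J → Fin m) : Prop :=
  ∀ a b : Fin k ⊕ J, a ≠ b →
    β (Sum.elim χ ω a) (Sum.elim χ ω b) = β (Sum.elim ψ y a) (Sum.elim ψ y b)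

/-- The condition on `θ : W → W` characterizing witnesses. -/
def Cond {k m : ℕ} (β : Fin m → Fin m → ℝ) (ψ χ : Fin k → Fin m)
    (θ : Fin m → Fin m) : Prop :=
  Function.Bijective θ ∧ (∀ u v, β (θ u) (θ v) = β u v) ∧ χ = θ ∘ ψ

lemma char (β : Fin m → Fin m → ℝ)
    (htf : ∀ i j : Fin m, (∀ l, β i l = β j l) → i = j)
    (ψ : Fin k → Fin m) (c : Fin m → ℕ) (χ : Fin k → Fin m) (ω : Jc m c → Fin m) :
    PAT β ψ (yc (c := c)) χ ω ↔
      ∃ θ : Fin m → Fin m, Cond β ψ χ θ ∧ ω = θ ∘ yc := by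
  constructor
  · intro hpat
    set ν : Fin 3 → Fin m → Fin m := fun t w => ω (Sum.inl (t, w)) with hν
    have hcross : ∀ {t t' : Fin 3} {w l : Fin m}, (t ≠ t' ∨ w ≠ l) →
        β (ν t w) (ν t' l) = β w l := by
      intro t t' w l h
      have hab : (Sum.inl (t, w) : (Fin 3 × Fin m) ⊕ (Σ w : Fin m, Fin (c w)))
          ≠ Sum.inl (t', l) := by
        intro hcon
        rcases h with h | h <;> [exact h (congrArg (fun z => (Sum.elim Prod.fst (fun e => 0) z)) hcon); exact h (congrArg (fun z => (Sum.elim Prod.snd (fun e => e.1) z)) hcon)]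
      exact hpat (Sum.inr (Sum.inl (t, w))) (Sum.inr (Sum.inl (t', l)))
        (fun hcon => hab (Sum.inr_injective hcon))
    have hinj : ∀ t, Function.Injective (ν t) := by
      intro t w w' h
      have ht' : t + 1 ≠ t := by
        intro hcon
        have := congrArg Fin.val hcon
        simp [Fin.val_add] at this
        omega
      refine htf w w' fun l => ?_
      calc β w l = β (ν t w) (ν (t + 1) l) := (hcross (Or.inl ht'.symm)).symm
        _ = β (ν t w') (ν (t + 1) l) := by rw [h]
        _ = β w' l := hcross (Or.inl ht'.symm)
    have hbij : ∀ t, Function.Bijective (ν t) :=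
      fun t => (Finite.injective_iff_bijective).1 (hinj t)
    have hthird : ∀ t t' : Fin 3, t ≠ t' → ∃ t'', t'' ≠ t ∧ t'' ≠ t' := by decide
    have hsame : ∀ t t' : Fin 3, ν t = ν t' := by
      intro t t'
      rcases eq_or_ne t t' with rfl | hne
      · rfl
      obtain ⟨t'', h1, h2⟩ := hthird t t' hne
      funext w
      refine htf _ _ fun u => ?_
      obtain ⟨l, rfl⟩ := (hbij t'').2 u
      rw [hcross (Or.inl h1.symm), hcross (Or.inl h2.symm)]
    set θ := ν 0 with hθ
    have hβpres : ∀ u v, β (θ u) (θ v) = β u v := by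
      intro u v
      have h1 : θ v = ν 1 v := congrFun (hsame 0 1) v
      rw [h1]
      exact hcross (Or.inl (by decide))
    have hχ : χ = θ ∘ ψ := by
      funext i
      have hlab : ∀ l, β (χ i) (ν 0 l) = β (ψ i) l := by
        intro l
        exact hpat (Sum.inl i) (Sum.inr (Sum.inl (0, l))) (by simp)
      refine htf _ _ fun u => ?_
      obtain ⟨l, rfl⟩ := (hbij 0).2 u
      rw [hlab l, ← hβpres (ψ i) l]
      rfl
    refine ⟨θ, ⟨hbij 0, hβpres, hχ⟩, ?_⟩
    funext x
    cases x with
    | inl q =>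
      show ν q.1 q.2 = θ (yc (Sum.inl q))
      exact congrFun (hsame q.1 0) q.2
    | inr e =>
      show ω (Sum.inr e) = θ (yc (Sum.inr e))
      have hye : yc (c := c) (Sum.inr e) = e.1 := rfl
      rw [hye]
      have hext : ∀ l, β (ω (Sum.inr e)) (ν 0 l) = β e.1 l := by
        intro l
        exact hpat (Sum.inr (Sum.inr e)) (Sum.inr (Sum.inl (0, l))) (by simp)
      refine htf _ _ fun u => ?_
      obtain ⟨l, rfl⟩ := (hbij 0).2 u
      rw [hext l, ← hβpres e.1 l]
  · rintro ⟨θ, ⟨hbij, hβpres, hχ⟩, hω⟩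
    intro a b _
    have key : ∀ x, Sum.elim χ ω x = θ (Sum.elim ψ (yc (c := c)) x) := by
      intro x
      cases x with
      | inl i => exact congrFun hχ i
      | inr j => exact congrFun hω j
    rw [key a, key b, hβpres]
end Char

section Sep
variable {k m : ℕ}

lemma prod_weight (α : Fin m → ℝ) (θ : Fin m → Fin m) (hbij : Function.Bijective θ)
    (c : Fin m → ℕ) :
    ∏ j : Jc m c, α (θ (yc (c := c) j)) = (∏ w, α w) ^ 3 * ∏ w, α (θ w) ^ c w := by
  rw [Fintype.prod_sum_type]
  congr 1
  · have h1 : ∏ q : Fin 3 × Fin m, α (θ (yc (c := c) (Sum.inl q)))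
        = ∏ t : Fin 3, ∏ w, α (θ w) := Fintype.prod_prod_type _
    rw [h1, Finset.prod_const]
    have h2 : ∏ w, α (θ w) = ∏ w, α w :=
      Fintype.prod_bijective θ hbij _ _ (fun x => rfl)
    rw [h2]
    simp
  · have h1 : ∏ e : (Σ w : Fin m, Fin (c w)), α (θ (yc (c := c) (Sum.inr e)))
        = ∏ w, ∏ _x : Fin (c w), α (θ w) := by
      rw [← Finset.univ_sigma_univ, Finset.prod_sigma]
      rfl
    rw [h1]
    exact Finset.prod_congr rfl fun w _ => by rw [Finset.prod_const, Finset.card_univ,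
      Fintype.card_fin]

lemma sum_filter_pattern (α : Fin m → ℝ) (β : Fin m → Fin m → ℝ)
    (htf : ∀ i j : Fin m, (∀ l, β i l = β j l) → i = j)
    (ψ : Fin k → Fin m) (c : Fin m → ℕ) (χ : Fin k → Fin m) :
    ∑ ω ∈ Finset.univ.filter
        (fun ω : Jc m c → Fin m => PAT β ψ (yc (c := c)) χ ω), ∏ j, α (ω j)
      = ∑ θ ∈ Finset.univ.filter (fun θ : Fin m → Fin m => Cond β ψ χ θ),
          (∏ w, α w) ^ 3 * ∏ w, α (θ w) ^ c w := by
  classical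
  refine Finset.sum_bij' (fun ω _ => fun w => ω (Sum.inl (0, w)))
    (fun θ _ => θ ∘ yc) ?_ ?_ ?_ ?_ ?_
  · intro ω hω
    simp only [Finset.mem_filter, Finset.mem_univ, true_and] at hω ⊢
    obtain ⟨θ, hθ, hωeq⟩ := (char β htf ψ c χ ω).1 hω
    have : (fun w => ω (Sum.inl (0, w))) = θ := by
      funext w
      exact congrFun hωeq (Sum.inl (0, w))
    rw [this]
    exact hθ
  · intro θ hθ
    simp only [Finset.mem_filter, Finset.mem_univ, true_and] at hθ ⊢
    exact (char β htf ψ c χ (θ ∘ yc)).2 ⟨θ, hθ, rfl⟩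
  · intro ω hω
    simp only [Finset.mem_filter, Finset.mem_univ, true_and] at hω
    obtain ⟨θ, hθ, hωeq⟩ := (char β htf ψ c χ ω).1 hω
    funext x
    show ω (Sum.inl (0, yc x)) = ω x
    rw [hωeq]
    rfl
  · intro θ _
    rfl
  · intro ω hω
    simp only [Finset.mem_filter, Finset.mem_univ, true_and] at hω
    obtain ⟨θ, hθ, hωeq⟩ := (char β htf ψ c χ ω).1 hω
    show ∏ j : Jc m c, α (ω j)
        = (∏ w, α w) ^ 3 * ∏ w, α (ω (Sum.inl (0, w))) ^ c w
    rw [hωeq]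
    exact prod_weight α θ hθ.1 c
end Sep

section SepMain
variable {k m : ℕ}

lemma separation (α : Fin m → ℝ) (β : Fin m → Fin m → ℝ) (hα : ∀ i, 0 < α i)
    (htf : ∀ i j : Fin m, (∀ l, β i l = β j l) → i = j)
    (φ ψ : Fin k → Fin m)
    (hcols : ∀ F : KGraph k, homPhi α β F φ = homPhi α β F ψ) :
    ∃ σ : Equiv.Perm (Fin m), IsAut α β σ ∧ ψ = ⇑σ ∘ φ := by
  classical
  have hmcol : ∀ (J : Type) [Fintype J] [DecidableEq J]
      (E : Multiset ((Fin k ⊕ J) × (Fin k ⊕ J))) (hE : ∀ e ∈ E, e.1 ≠ e.2),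
      mcol α β E φ = mcol α β E ψ := by
    intro J _ _ E hE
    rw [← homPhi_gadget α β hα E hE φ, ← homPhi_gadget α β hα E hE ψ]
    exact hcols _
  set S : Finset ℝ := Finset.image (fun q : Fin m × Fin m => β q.1 q.2) Finset.univ
    with hS
  have hmemS : ∀ x y : Fin m, β x y ∈ S := fun x y =>
    Finset.mem_image.2 ⟨(x, y), Finset.mem_univ _, rfl⟩
  have hCpos : (0:ℝ) < (∏ w, α w) ^ 3 :=
    pow_pos (Finset.prod_pos fun w _ => hα w) 3
  -- Step 1 & 2 : for every c, the weighted sums over Cond-sets agree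
  have hstar : ∀ c : Fin m → ℕ,
      (∑ θ ∈ Finset.univ.filter (fun θ : Fin m → Fin m => Cond β ψ φ θ),
        ∏ w, α (θ w) ^ c w)
      = ∑ θ ∈ Finset.univ.filter (fun θ : Fin m → Fin m => Cond β ψ ψ θ),
        ∏ w, α (θ w) ^ c w := by
    intro c
    have key := keyLA (I := Jc m c → Fin m) (I' := Jc m c → Fin m)
      (P := {e : (Fin k ⊕ Jc m c) × (Fin k ⊕ Jc m c) // e.1 ≠ e.2})
      (fun ω => ∏ j, α (ω j)) (fun ω => ∏ j, α (ω j))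
      (fun ω p => β (Sum.elim φ ω p.val.1) (Sum.elim φ ω p.val.2))
      (fun ω p => β (Sum.elim ψ ω p.val.1) (Sum.elim ψ ω p.val.2))
      (fun p => β (Sum.elim ψ (yc (c := c)) p.val.1) (Sum.elim ψ (yc (c := c)) p.val.2))
      S (fun i p => hmemS _ _) (fun i p => hmemS _ _) (fun p => hmemS _ _)
      (fun cc => by
        rw [← mcol_Emono α β cc φ, ← mcol_Emono α β cc ψ]
        exact hmcol _ (Emono cc) (Emono_loopless cc))
    have hfilt : ∀ χ : Fin k → Fin m,
        Finset.univ.filter (fun ω : Jc m c → Fin m =>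
          (fun p : {e : (Fin k ⊕ Jc m c) × (Fin k ⊕ Jc m c) // e.1 ≠ e.2} =>
            β (Sum.elim χ ω p.val.1) (Sum.elim χ ω p.val.2))
          = fun p => β (Sum.elim ψ (yc (c := c)) p.val.1) (Sum.elim ψ (yc (c := c)) p.val.2))
        = Finset.univ.filter (fun ω => PAT β ψ (yc (c := c)) χ ω) := by
      intro χ
      apply Finset.filter_congr
      intro ω _
      rw [funext_iff, Subtype.forall]
      constructor
      · intro h a b hab; exact h (a, b) hab
      · intro h e he; exact h e.1 e.2 he
    rw [hfilt φ, hfilt ψ, sum_filter_pattern α β htf ψ c φ,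
      sum_filter_pattern α β htf ψ c ψ, ← Finset.mul_sum, ← Finset.mul_sum] at key
    exact mul_left_cancel₀ hCpos.ne' key
  -- Step 3 : extract an automorphism-like θ with α ∘ θ = α
  have key2 := keyLA (I := {θ : Fin m → Fin m // Cond β ψ φ θ})
    (I' := {θ : Fin m → Fin m // Cond β ψ ψ θ}) (P := Fin m)
    (fun _ => (1:ℝ)) (fun _ => (1:ℝ))
    (fun θ w => α (θ.val w)) (fun θ w => α (θ.val w)) α
    (Finset.image α Finset.univ)
    (fun i p => Finset.mem_image.2 ⟨_, Finset.mem_univ _, rfl⟩)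
    (fun i p => Finset.mem_image.2 ⟨_, Finset.mem_univ _, rfl⟩)
    (fun p => Finset.mem_image.2 ⟨_, Finset.mem_univ _, rfl⟩)
    (fun c => by
      have e1 : ∑ θ : {θ : Fin m → Fin m // Cond β ψ φ θ}, (1:ℝ) * ∏ w, α (θ.val w) ^ c w
            = ∑ θ ∈ Finset.univ.filter (fun θ : Fin m → Fin m => Cond β ψ φ θ),
                ∏ w, α (θ w) ^ c w := by
        simp only [one_mul]
        exact (Finset.sum_subtype
          (Finset.univ.filter (fun θ : Fin m → Fin m => Cond β ψ φ θ))
          (fun x => by simp) (fun θ : Fin m → Fin m => ∏ w, α (θ w) ^ c w)).symm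
      have e2 : ∑ θ : {θ : Fin m → Fin m // Cond β ψ ψ θ}, (1:ℝ) * ∏ w, α (θ.val w) ^ c w
            = ∑ θ ∈ Finset.univ.filter (fun θ : Fin m → Fin m => Cond β ψ ψ θ),
                ∏ w, α (θ w) ^ c w := by
        simp only [one_mul]
        exact (Finset.sum_subtype
          (Finset.univ.filter (fun θ : Fin m → Fin m => Cond β ψ ψ θ))
          (fun x => by simp) (fun θ : Fin m → Fin m => ∏ w, α (θ w) ^ c w)).symm
      rw [e1, e2]
      exact hstar c)
  -- RHS of key2 is positive : it contains the identity
  have hid : ((Finset.univ.filter (fun θ' : {θ : Fin m → Fin m // Cond β ψ ψ θ} =>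
      (fun w => α (θ'.val w)) = α))).Nonempty := by
    refine ⟨⟨id, Function.bijective_id, fun u v => rfl, rfl⟩, ?_⟩
    simp only [Finset.mem_filter, Finset.mem_univ, true_and]
    rfl
  have hRpos : (0:ℝ) < ∑ i' ∈ Finset.univ.filter
      (fun θ' : {θ : Fin m → Fin m // Cond β ψ ψ θ} => (fun w => α (θ'.val w)) = α),
      (1:ℝ) := by
    rw [Finset.sum_const, nsmul_eq_mul, mul_one]
    exact_mod_cast Finset.card_pos.2 hid
  rw [← key2] at hRpos
  have hne : (Finset.univ.filter (fun θ' : {θ : Fin m → Fin m // Cond β ψ φ θ} =>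
      (fun w => α (θ'.val w)) = α)).Nonempty := by
    by_contra h
    rw [Finset.not_nonempty_iff_eq_empty] at h
    rw [h, Finset.sum_empty] at hRpos
    exact lt_irrefl _ hRpos
  obtain ⟨⟨θ, hbij, hβp, hφeq⟩, hmem⟩ := hne
  simp only [Finset.mem_filter, Finset.mem_univ, true_and] at hmem
  set σ0 : Equiv.Perm (Fin m) := Equiv.ofBijective θ hbij with hσ0
  have hσap : ∀ x, σ0 x = θ x := fun x => rfl
  refine ⟨σ0.symm, ⟨?_, ?_⟩, ?_⟩
  · intro v
    have h1 : α (θ (σ0.symm v)) = α (σ0.symm v) := congrFun hmem (σ0.symm v)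
    have h2 : θ (σ0.symm v) = v := by
      rw [← hσap]; exact σ0.apply_symm_apply v
    rw [h2] at h1
    exact h1.symm
  · intro u v
    have h1 := hβp (σ0.symm u) (σ0.symm v)
    have h2 : θ (σ0.symm u) = u := by rw [← hσap]; exact σ0.apply_symm_apply u
    have h3 : θ (σ0.symm v) = v := by rw [← hσap]; exact σ0.apply_symm_apply v
    rw [h2, h3] at h1
    exact h1.symm
  · funext i
    have h1 : φ i = θ (ψ i) := congrFun hφeq i
    show ψ i = σ0.symm (φ i)
    rw [h1, ← hσap]
    exact (σ0.symm_apply_apply (ψ i)).symm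
end SepMain

section Struct
variable {k m : ℕ}

lemma homPhi_invariant (α : Fin m → ℝ) (β : Fin m → Fin m → ℝ) (F : KGraph k)
    (σ : Equiv.Perm (Fin m)) (hσ : IsAut α β σ) (φ : Fin k → Fin m) :
    homPhi α β F (⇑σ ∘ φ) = homPhi α β F φ := by
  classical
  obtain ⟨hσα, hσβ⟩ := hσ
  rw [homPhi, homPhi]
  refine Finset.sum_bij' (fun ψ _ => ⇑σ.symm ∘ ψ) (fun ψ _ => ⇑σ ∘ ψ) ?_ ?_ ?_ ?_ ?_
  · intro ψ hψ
    simp only [Finset.mem_filter, Finset.mem_univ, true_and] at hψ ⊢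
    funext i
    show σ.symm (ψ (F.lab i)) = φ i
    have h : ψ (F.lab i) = σ (φ i) := congrFun hψ i
    rw [h]
    exact σ.symm_apply_apply (φ i)
  · intro ψ hψ
    simp only [Finset.mem_filter, Finset.mem_univ, true_and] at hψ ⊢
    funext i
    show σ (ψ (F.lab i)) = σ (φ i)
    have h : ψ (F.lab i) = φ i := congrFun hψ i
    rw [h]
  · intro ψ _
    funext u
    exact σ.apply_symm_apply (ψ u)
  · intro ψ _
    funext u
    exact σ.symm_apply_apply (ψ u)
  · intro ψ _
    have hαs : ∀ x, α (σ.symm x) = α x := by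
      intro x
      have := hσα (σ.symm x)
      rw [σ.apply_symm_apply] at this
      exact this.symm
    have hβs : ∀ x y, β (σ.symm x) (σ.symm y) = β x y := by
      intro x y
      have := hσβ (σ.symm x) (σ.symm y)
      rw [σ.apply_symm_apply, σ.apply_symm_apply] at this
      exact this.symm
    congr 1
    · congr 1
      · exact (Finset.prod_congr rfl fun u _ => (hαs (ψ u)).symm)
      · exact (Finset.prod_congr rfl fun i _ => (hσα (φ i)))
    · apply congrArg
      apply Multiset.map_congr rfl
      intro e _
      exact (hβs (ψ e.1) (ψ e.2)).symm

def unitKG (k : ℕ) : KGraph k :=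
  ⟨Fin k, id, fun _ _ h => h, 0, by simp⟩

lemma homPhi_unit (α : Fin m → ℝ) (β : Fin m → Fin m → ℝ) (hα : ∀ i, 0 < α i)
    (φ : Fin k → Fin m) : homPhi α β (unitKG k) φ = 1 := by
  classical
  show (∑ ψ ∈ Finset.univ.filter (fun ψ : Fin k → Fin m => ψ ∘ id = φ),
      ((∏ u, α (ψ u)) / ∏ i, α (φ i)) *
        ((0 : Multiset (Fin k × Fin k)).map (fun e => β (ψ e.1) (ψ e.2))).prod) = 1
  have hfilt : Finset.univ.filter (fun ψ : Fin k → Fin m => ψ ∘ id = φ) = {φ} := by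
    ext ψ
    simp [Function.comp_id]
  rw [hfilt, Finset.sum_singleton]
  have hD : (∏ i, α (φ i)) ≠ 0 := Finset.prod_ne_zero_iff.2 fun i _ => (hα (φ i)).ne'
  simp [div_self hD]

lemma homPhi_glue (α : Fin m → ℝ) (β : Fin m → Fin m → ℝ) (hα : ∀ i, 0 < α i)
    (F₁ F₂ : KGraph k) (φ : Fin k → Fin m) :
    homPhi α β (glue F₁ F₂) φ = homPhi α β F₁ φ * homPhi α β F₂ φ := by
  classical
  set R := {v : F₂.V // v ∉ Set.range F₂.lab} with hR
  have hD : (∏ i, α (φ i)) ≠ 0 := Finset.prod_ne_zero_iff.2 fun i _ => (hα (φ i)).ne'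
  have hemb_lab : ∀ i, KGraph.emb F₁ F₂ (F₂.lab i) = Sum.inl (F₁.lab i) := by
    intro i
    rw [KGraph.emb, dif_pos ⟨i, rfl⟩]
    congr 1
    congr 1
    exact Equiv.ofInjective_symm_apply F₂.lab_inj i  -- maybe wrong form
  have hemb_not : ∀ (r : R), KGraph.emb F₁ F₂ r.val = Sum.inr r := by
    intro r
    rw [KGraph.emb, dif_neg r.2]
  rw [homPhi, homPhi, homPhi, Finset.sum_mul_sum, ← Finset.sum_product']
  refine Finset.sum_bij' (fun Ψ _ => ((fun v => Ψ (Sum.inl v)), (fun v => Ψ (KGraph.emb F₁ F₂ v))))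
    (fun p _ => fun x => Sum.elim p.1 (fun r : R => p.2 r.val) x) ?_ ?_ ?_ ?_ ?_
  · intro Ψ hΨ
    simp only [Finset.mem_filter, Finset.mem_univ, true_and, Finset.mem_product] at hΨ ⊢
    constructor
    · funext i
      exact congrFun hΨ i
    · funext i
      show Ψ (KGraph.emb F₁ F₂ (F₂.lab i)) = φ i
      rw [hemb_lab i]
      exact congrFun hΨ i
  · intro p hp
    simp only [Finset.mem_filter, Finset.mem_univ, true_and, Finset.mem_product] at hp ⊢
    funext i
    show Sum.elim p.1 (fun r : R => p.2 r.val) (Sum.inl (F₁.lab i)) = φ i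
    exact congrFun hp.1 i
  · intro Ψ _
    funext x
    cases x with
    | inl v => rfl
    | inr r =>
      show Ψ (KGraph.emb F₁ F₂ r.val) = Ψ (Sum.inr r)
      rw [hemb_not r]
  · intro p hp
    simp only [Finset.mem_filter, Finset.mem_univ, true_and, Finset.mem_product] at hp
    refine Prod.ext ?_ ?_
    · rfl
    · funext v
      show Sum.elim p.1 (fun r : R => p.2 r.val) (KGraph.emb F₁ F₂ v) = p.2 v
      by_cases h : v ∈ Set.range F₂.lab
      · rw [KGraph.emb, dif_pos h]
        show p.1 (F₁.lab ((Equiv.ofInjective F₂.lab F₂.lab_inj).symm ⟨v, h⟩)) = p.2 v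
        have e1 : p.1 (F₁.lab ((Equiv.ofInjective F₂.lab F₂.lab_inj).symm ⟨v, h⟩))
            = φ ((Equiv.ofInjective F₂.lab F₂.lab_inj).symm ⟨v, h⟩) :=
          congrFun hp.1 _
        have e2 : p.2 (F₂.lab ((Equiv.ofInjective F₂.lab F₂.lab_inj).symm ⟨v, h⟩))
            = φ ((Equiv.ofInjective F₂.lab F₂.lab_inj).symm ⟨v, h⟩) :=
          congrFun hp.2 _
        have e3 : F₂.lab ((Equiv.ofInjective F₂.lab F₂.lab_inj).symm ⟨v, h⟩) = v :=
          Equiv.apply_ofInjective_symm F₂.lab_inj ⟨v, h⟩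
        rw [e1, ← e2]
        exact congrArg p.2 e3
      · rw [KGraph.emb, dif_neg h]
        rfl
  · intro Ψ hΨ
    simp only [Finset.mem_filter, Finset.mem_univ, true_and] at hΨ
    -- weights
    have hw : (∏ u, α (Ψ u))
        = (∏ v : F₁.V, α (Ψ (Sum.inl v))) * ∏ r : R, α (Ψ (Sum.inr r)) :=
      Fintype.prod_sum_type _
    have hw2 : (∏ v : F₂.V, α (Ψ (KGraph.emb F₁ F₂ v)))
        = (∏ i, α (φ i)) * ∏ r : R, α (Ψ (Sum.inr r)) := by
      have hbij : Function.Bijective (Sum.elim F₂.lab (fun r : R => r.val)) := by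
        constructor
        · rintro (i | r) (j | s) hab
          · exact congrArg Sum.inl (F₂.lab_inj hab)
          · exact absurd ⟨i, hab⟩ s.2
          · exact absurd ⟨j, hab.symm⟩ r.2
          · exact congrArg Sum.inr (Subtype.ext hab)
        · intro v
          by_cases h : v ∈ Set.range F₂.lab
          · obtain ⟨i, rfl⟩ := h
            exact ⟨Sum.inl i, rfl⟩
          · exact ⟨Sum.inr ⟨v, h⟩, rfl⟩
      have h0 := Fintype.prod_bijective (Sum.elim F₂.lab (fun r : R => r.val)) hbij
        (fun x => α (Ψ (KGraph.emb F₁ F₂ (Sum.elim F₂.lab (fun r : R => r.val) x))))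
        (fun v => α (Ψ (KGraph.emb F₁ F₂ v))) (fun x => rfl)
      rw [← h0, Fintype.prod_sum_type]
      congr 1
      · refine Finset.prod_congr rfl fun i _ => ?_
        show α (Ψ (KGraph.emb F₁ F₂ (F₂.lab i))) = α (φ i)
        rw [hemb_lab i]
        have h4 : Ψ (Sum.inl (F₁.lab i)) = φ i := congrFun hΨ i
        rw [h4]
      · refine Finset.prod_congr rfl fun r _ => ?_
        show α (Ψ (KGraph.emb F₁ F₂ r.val)) = _
        rw [hemb_not r]
    -- edges
    have he : ((glue F₁ F₂).edges.map (fun e => β (Ψ e.1) (Ψ e.2))).prod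
        = (F₁.edges.map (fun e => β (Ψ (Sum.inl e.1)) (Ψ (Sum.inl e.2)))).prod *
          (F₂.edges.map (fun e => β (Ψ (KGraph.emb F₁ F₂ e.1)) (Ψ (KGraph.emb F₁ F₂ e.2)))).prod := by
      show ((F₁.edges.map (fun e : F₁.V × F₁.V =>
          ((Sum.inl e.1 : F₁.V ⊕ R), (Sum.inl e.2 : F₁.V ⊕ R))) +
        F₂.edges.map (fun e : F₂.V × F₂.V =>
          (KGraph.emb F₁ F₂ e.1, KGraph.emb F₁ F₂ e.2))).map
          (fun e => β (Ψ e.1) (Ψ e.2))).prod = _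
      rw [Multiset.map_add, Multiset.prod_add, Multiset.map_map, Multiset.map_map]
      rfl
    rw [hw, he, hw2, mul_div_cancel_left₀ _ hD]
    ring
end Struct

end Aux

/-- Lemma 4: for twin-free `G`, the column space of `N(k,G)` consists of
exactly the automorphism-invariant vectors `f : V(G)^k → ℝ`. -/
theorem column_space_eq_invariants {m k : ℕ} (α : Fin m → ℝ) (β : Fin m → Fin m → ℝ)
    (hα : ∀ i, 0 < α i) (hβ : ∀ i j, β i j = β j i)
    (htf : ∀ i j : Fin m, (∀ l, β i l = β j l) → i = j)
    (f : (Fin k → Fin m) → ℝ) :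
    f ∈ Submodule.span ℝ
        (Set.range fun F : KGraph k => fun φ : Fin k → Fin m => homPhi α β F φ) ↔
      ∀ σ : Equiv.Perm (Fin m), IsAut α β σ →
        ∀ φ : Fin k → Fin m, f (⇑σ ∘ φ) = f φ := by
  classical
  set colSet : Set ((Fin k → Fin m) → ℝ) :=
    Set.range fun F : KGraph k => fun φ : Fin k → Fin m => homPhi α β F φ with hcolSet
  constructor
  · -- forward: every element of the span is invariant
    intro hf
    refine Submodule.span_induction
      (p := fun g _ => ∀ σ : Equiv.Perm (Fin m), IsAut α β σ →
        ∀ φ : Fin k → Fin m, g (⇑σ ∘ φ) = g φ) ?_ ?_ ?_ ?_ hf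
    · rintro g ⟨F, rfl⟩ σ hσ φ
      exact homPhi_invariant α β F σ hσ φ
    · intro σ hσ φ; rfl
    · intro x y _ _ hx hy σ hσ φ
      simp only [Pi.add_apply, hx σ hσ φ, hy σ hσ φ]
    · intro a x _ hx σ hσ φ
      simp only [Pi.smul_apply, hx σ hσ φ]
  · -- backward
    intro hf
    have hone : (1 : (Fin k → Fin m) → ℝ) ∈ Submodule.span ℝ colSet :=
      Submodule.subset_span ⟨unitKG k, by funext φ; exact homPhi_unit α β hα φ⟩
    have hmul : ∀ g₁ g₂ : (Fin k → Fin m) → ℝ, g₁ ∈ Submodule.span ℝ colSet →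
        g₂ ∈ Submodule.span ℝ colSet → g₁ * g₂ ∈ Submodule.span ℝ colSet := by
      intro g₁ g₂ h1 h2
      have hss : Submodule.span ℝ colSet * Submodule.span ℝ colSet
          ≤ Submodule.span ℝ colSet := by
        rw [Submodule.span_mul_span]
        apply Submodule.span_le.2
        rintro z hz
        obtain ⟨x, hx, y, hy, rfl⟩ := Set.mem_mul.1 hz
        obtain ⟨F₁, rfl⟩ := hx
        obtain ⟨F₂, rfl⟩ := hy
        exact Submodule.subset_span
          ⟨glue F₁ F₂, by funext φ; exact homPhi_glue α β hα F₁ F₂ φ⟩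
      exact hss (Submodule.mul_mem_mul h1 h2)
    -- indicator functions of equivalence classes
    have hind : ∀ φ₀ : Fin k → Fin m, ∃ h : (Fin k → Fin m) → ℝ,
        h ∈ Submodule.span ℝ colSet ∧
        ∀ φ, h φ = if (∀ F : KGraph k, homPhi α β F φ = homPhi α β F φ₀)
          then 1 else 0 := by
      intro φ₀
      have hfac : ∀ ψ : Fin k → Fin m, ∃ e : (Fin k → Fin m) → ℝ,
          e ∈ Submodule.span ℝ colSet ∧
          (∀ φ, (∀ F : KGraph k, homPhi α β F φ = homPhi α β F φ₀) → e φ = 1) ∧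
          (¬ (∀ F : KGraph k, homPhi α β F ψ = homPhi α β F φ₀) → e ψ = 0) := by
        intro ψ
        by_cases hψ : ∀ F : KGraph k, homPhi α β F ψ = homPhi α β F φ₀
        · exact ⟨1, hone, fun φ _ => rfl, fun hcon => absurd hψ hcon⟩
        · push_neg at hψ
          obtain ⟨F, hF⟩ := hψ
          set d : ℝ := homPhi α β F φ₀ - homPhi α β F ψ with hd
          have hdne : d ≠ 0 := sub_ne_zero.2 (Ne.symm hF)
          refine ⟨fun φ => (homPhi α β F φ - homPhi α β F ψ) / d, ?_, ?_, ?_⟩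
          · have heq : (fun φ => (homPhi α β F φ - homPhi α β F ψ) / d)
                = d⁻¹ • (fun φ => homPhi α β F φ)
                  - (homPhi α β F ψ / d) • (1 : (Fin k → Fin m) → ℝ) := by
              funext φ
              simp only [Pi.sub_apply, Pi.smul_apply, Pi.one_apply, smul_eq_mul]
              ring
            rw [heq]
            exact Submodule.sub_mem _
              (Submodule.smul_mem _ _ (Submodule.subset_span ⟨F, rfl⟩))
              (Submodule.smul_mem _ _ hone)
          · intro φ hφ
            show (homPhi α β F φ - homPhi α β F ψ) / d = 1
            rw [hφ F, ← hd]
            exact div_self hdne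
          · intro _
            simp
      choose e he h1 h0 using hfac
      refine ⟨∏ ψ : Fin k → Fin m, e ψ, ?_, ?_⟩
      · exact Finset.prod_induction e (fun g => g ∈ Submodule.span ℝ colSet)
          hmul hone (fun ψ _ => he ψ)
      · intro φ
        rw [Finset.prod_apply]
        by_cases hφ : ∀ F : KGraph k, homPhi α β F φ = homPhi α β F φ₀
        · rw [if_pos hφ]
          exact Finset.prod_eq_one fun ψ _ => h1 ψ φ hφ
        · rw [if_neg hφ]
          exact Finset.prod_eq_zero (Finset.mem_univ φ) (h0 φ hφ)
    choose hfun hmem hval using hind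
    set Nb : (Fin k → Fin m) → ℝ := fun φ₀ =>
      ((Finset.univ.filter (fun χ : Fin k → Fin m =>
        ∀ F : KGraph k, homPhi α β F χ = homPhi α β F φ₀)).card : ℝ) with hNb
    have key : f = ∑ φ₀ : Fin k → Fin m, (f φ₀ / Nb φ₀) • hfun φ₀ := by
      funext φ
      rw [Finset.sum_apply]
      have hterm0 : ∀ φ₀ : Fin k → Fin m, ((f φ₀ / Nb φ₀) • hfun φ₀) φ
          = if (∀ F : KGraph k, homPhi α β F φ = homPhi α β F φ₀)
            then f φ₀ / Nb φ₀ else 0 := by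
        intro φ₀
        rw [Pi.smul_apply, hval φ₀ φ]
        by_cases h : ∀ F : KGraph k, homPhi α β F φ = homPhi α β F φ₀
        · rw [if_pos h, if_pos h, smul_eq_mul, mul_one]
        · rw [if_neg h, if_neg h, smul_eq_mul, mul_zero]
      rw [Finset.sum_congr rfl fun φ₀ _ => hterm0 φ₀, ← Finset.sum_filter]
      have hterm : ∀ φ₀ ∈ Finset.univ.filter (fun φ₀ : Fin k → Fin m =>
          ∀ F : KGraph k, homPhi α β F φ = homPhi α β F φ₀),
          f φ₀ / Nb φ₀ = f φ / Nb φ := by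
        intro φ₀ hφ₀
        simp only [Finset.mem_filter, Finset.mem_univ, true_and] at hφ₀
        obtain ⟨σ, hσ, hσeq⟩ := separation α β hα htf φ φ₀ hφ₀
        have hfeq : f φ₀ = f φ := by rw [hσeq]; exact hf σ hσ φ
        have hNbeq : Nb φ₀ = Nb φ := by
          have hfc : Finset.univ.filter (fun χ : Fin k → Fin m =>
                ∀ F : KGraph k, homPhi α β F χ = homPhi α β F φ₀)
              = Finset.univ.filter (fun χ : Fin k → Fin m =>
                ∀ F : KGraph k, homPhi α β F χ = homPhi α β F φ) := by
            apply Finset.filter_congr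
            intro χ _
            constructor
            · intro h F; rw [h F, ← hφ₀ F]
            · intro h F; rw [h F, hφ₀ F]
          simp only [hNb, hfc]
        rw [hfeq, hNbeq]
      rw [Finset.sum_congr rfl hterm, Finset.sum_const, nsmul_eq_mul]
      have hsets : Finset.univ.filter (fun φ₀ : Fin k → Fin m =>
            ∀ F : KGraph k, homPhi α β F φ = homPhi α β F φ₀)
          = Finset.univ.filter (fun χ : Fin k → Fin m =>
            ∀ F : KGraph k, homPhi α β F χ = homPhi α β F φ) := by
        apply Finset.filter_congr
        intro χ _
        constructor
        · intro h F; exact (h F).symm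
        · intro h F; exact (h F).symm
      rw [hsets]
      have hpos : (0:ℝ) < Nb φ := by
        simp only [hNb]
        have : φ ∈ Finset.univ.filter (fun χ : Fin k → Fin m =>
            ∀ F : KGraph k, homPhi α β F χ = homPhi α β F φ) :=
          Finset.mem_filter.2 ⟨Finset.mem_univ _, fun F => rfl⟩
        exact_mod_cast Finset.card_pos.2 ⟨φ, this⟩
      rw [show ((Finset.univ.filter (fun χ : Fin k → Fin m =>
          ∀ F : KGraph k, homPhi α β F χ = homPhi α β F φ)).card : ℝ) = Nb φ from rfl]
      rw [mul_comm]
      exact (div_mul_cancel₀ (f φ) hpos.ne').symm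
    rw [key]
    exact Submodule.sum_mem _ fun φ₀ _ => Submodule.smul_mem _ _ (hmem φ₀)
end
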